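/- arXiv:2007.15261 — 6 statements merged into one kernel-verified Lean document; each statement's English description precedes it below -/
import Mathlib

section
/- Let μ be a finite measure space with indicator 𝟙, and let u : L₁(ν₀) → L₁(μ) be a lattice isometric embedding from the L₁ space of a probability measure ν₀ sending the constant function 1 to a function 𝕀 with support S. Define the measure μ̃ on S by μ̃(B) = ∫_B 𝕀 dμ and the map ũ(h) = (u(h)/𝕀)|_S. Then ũ : L₁(ν₀) → L₁(μ̃) is a measure-preserving lattice isometric embedding, i.e. ∫ ũ(h) dμ̃ = ∫ h dν₀ for all h. -/
open MeasureTheory Filter ENNReal NNReal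

section Aux

private lemma norm_nonneg_L1 {m : Type} [MeasurableSpace m] {ρ : Measure m}
    (f : Lp ℝ 1 ρ) (hf : 0 ≤ f) : ‖f‖ = ∫ x, (f : m → ℝ) x ∂ρ := by
  rw [L1.norm_eq_integral_norm]
  refine integral_congr_ae ?_
  filter_upwards [(Lp.coeFn_nonneg f).mpr hf] with x hx
  simp [Real.norm_eq_abs, abs_of_nonneg hx]

variable {Ω α₀ : Type} [MeasurableSpace Ω] [MeasurableSpace α₀]
    {μ : Measure Ω} [IsFiniteMeasure μ] {ν₀ : Measure α₀} [IsProbabilityMeasure ν₀]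
    (u : Lp ℝ 1 ν₀ →ₗᵢ[ℝ] Lp ℝ 1 μ)
    (hu : ∀ f g : Lp ℝ 1 ν₀, u (f ⊔ g) = u f ⊔ u g)

include hu

private lemma u_abs (f : Lp ℝ 1 ν₀) : u |f| = |u f| := by
  rw [abs, abs, hu, map_neg]

private lemma u_nonneg (f : Lp ℝ 1 ν₀) (hf : 0 ≤ f) : 0 ≤ u f := by
  have : u f = |u f| := by rw [← u_abs u hu, abs_of_nonneg hf]
  rw [this]; exact abs_nonneg _

private lemma u_inf (f g : Lp ℝ 1 ν₀) : u (f ⊓ g) = u f ⊓ u g := by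
  have : f ⊓ g = -(-f ⊔ -g) := by rw [neg_sup, neg_neg, neg_neg]
  rw [this, map_neg, hu, map_neg, map_neg, neg_sup, neg_neg, neg_neg]

private lemma one_nonneg : (0 : Lp ℝ 1 ν₀) ≤ MemLp.toLp (fun _ => (1:ℝ)) (memLp_const 1) := by
  refine (Lp.coeFn_nonneg _).mp ?_
  filter_upwards [MemLp.coeFn_toLp (memLp_const (1:ℝ))] with y hy
  rw [hy]; norm_num

/-- key vanishing lemma: `u h` vanishes a.e. where `u 1` vanishes. -/
private lemma vanish (h : Lp ℝ 1 ν₀) :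
    ∀ᵐ x ∂μ, (u (MemLp.toLp (fun _ => (1:ℝ)) (memLp_const 1)) : Ω → ℝ) x = 0 →
      (u h : Ω → ℝ) x = 0 := by
  classical
  set one : Lp ℝ 1 ν₀ := MemLp.toLp (fun _ => (1:ℝ)) (memLp_const 1) with hone
  set J : Ω → ℝ := ⇑(u one) with hJdef
  set S : Set Ω := {x | J x = 0} with hSdef
  have hJm : Measurable J := (Lp.stronglyMeasurable (u one)).measurable
  have hSm : MeasurableSet S := hJm (measurableSet_singleton 0)
  set g : Lp ℝ 1 ν₀ := |h| with hgdef
  have hg0 : (0 : Lp ℝ 1 ν₀) ≤ g := abs_nonneg h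
  suffices hsuff : ∀ᵐ x ∂μ, x ∈ S → (u g : Ω → ℝ) x = 0 by
    have hcoe : ⇑(u g) =ᵐ[μ] fun x => |(u h : Ω → ℝ) x| := by
      rw [hgdef, u_abs u hu h]; exact Lp.coeFn_abs (u h)
    filter_upwards [hsuff, hcoe] with x h1 h2 hx0
    have := h1 hx0
    rw [h2] at this
    exact abs_eq_zero.mp this
  have hInt : Integrable (⇑(u g)) μ := L1.integrable_coeFn (u g)
  have hpos : 0 ≤ᵐ[μ] ⇑(u g) := (Lp.coeFn_nonneg _).mpr (u_nonneg u hu g hg0)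
  -- key upper bound
  have key : ∀ n : ℕ, ∫ x in S, (u g : Ω → ℝ) x ∂μ ≤
      ∫ y, (|(h : α₀ → ℝ) y| - min |(h : α₀ → ℝ) y| (n:ℝ)) ∂ν₀ := by
    intro n
    set c : Lp ℝ 1 ν₀ := (n : ℝ) • one with hcdef
    have hc0 : (0 : Lp ℝ 1 ν₀) ≤ c := by
      refine (Lp.coeFn_nonneg _).mp ?_
      have hone_coe : ⇑one =ᵐ[ν₀] fun _ => (1:ℝ) := MemLp.coeFn_toLp _
      filter_upwards [Lp.coeFn_smul (n:ℝ) one, hone_coe] with y e1 e2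
      rw [Pi.zero_apply, e1, Pi.smul_apply, e2, smul_eq_mul, mul_one]
      positivity
    set k : Lp ℝ 1 ν₀ := g ⊓ c with hkdef
    have hk_le : k ≤ g := inf_le_left
    have hk0 : (0 : Lp ℝ 1 ν₀) ≤ k := le_inf hg0 hc0
    have huk0 : 0 ≤ u k := u_nonneg u hu k hk0
    have hukS : ∀ᵐ x ∂μ, x ∈ S → (u k : Ω → ℝ) x = 0 := by
      have h1 : u k ≤ (n:ℝ) • u one := by
        rw [hkdef, u_inf u hu, hcdef, u.map_smul]; exact inf_le_right
      filter_upwards [(Lp.coeFn_nonneg (u k)).mpr huk0, (Lp.coeFn_le _ _).mpr h1,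
        Lp.coeFn_smul (n:ℝ) (u one)] with x e1 e2 e3 hxS
      have : (u k : Ω → ℝ) x ≤ (n:ℝ) * J x := by
        refine e2.trans ?_
        rw [e3]
        exact le_of_eq rfl
      have hx0 : J x = 0 := hxS
      rw [hx0, mul_zero] at this
      exact le_antisymm this e1
    have hI1 : ∫ x in S, (u k : Ω → ℝ) x ∂μ = 0 := by
      have : ⇑(u k) =ᵐ[μ.restrict S] 0 := (ae_restrict_iff' hSm).mpr hukS
      rw [integral_congr_ae this]
      simp
    have hdn : (0 : Lp ℝ 1 μ) ≤ u (g - k) := u_nonneg u hu _ (sub_nonneg.mpr hk_le)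
    have hI2 : ∫ x in S, ((u g : Ω → ℝ) x - (u k : Ω → ℝ) x) ∂μ ≤ ‖g - k‖ := by
      have hsub : (fun x => (u g : Ω → ℝ) x - (u k : Ω → ℝ) x) =ᵐ[μ] ⇑(u (g - k)) := by
        rw [map_sub]
        exact (Lp.coeFn_sub (u g) (u k)).symm
      calc ∫ x in S, ((u g : Ω → ℝ) x - (u k : Ω → ℝ) x) ∂μ
          = ∫ x in S, (u (g - k) : Ω → ℝ) x ∂μ :=
            integral_congr_ae (ae_restrict_of_ae hsub)
        _ ≤ ∫ x, (u (g - k) : Ω → ℝ) x ∂μ :=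
            setIntegral_le_integral (L1.integrable_coeFn _) ((Lp.coeFn_nonneg _).mpr hdn)
        _ = ‖u (g - k)‖ := (norm_nonneg_L1 _ hdn).symm
        _ = ‖g - k‖ := u.norm_map _
    have hI3 : ‖g - k‖ = ∫ y, (|(h : α₀ → ℝ) y| - min |(h : α₀ → ℝ) y| (n:ℝ)) ∂ν₀ := by
      rw [norm_nonneg_L1 _ (sub_nonneg.mpr hk_le)]
      refine integral_congr_ae ?_
      filter_upwards [Lp.coeFn_sub g k, Lp.coeFn_inf g c, Lp.coeFn_abs h,
        Lp.coeFn_smul (n:ℝ) one, MemLp.coeFn_toLp (memLp_const (1:ℝ))] with y e1 e2 e3 e4 e5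
      rw [e1, Pi.sub_apply, e2, Pi.inf_apply, e3, e4, Pi.smul_apply]
      have e5' : (one : α₀ → ℝ) y = 1 := e5
      rw [e5', smul_eq_mul, mul_one]
    have hsplit : ∫ x in S, (u g : Ω → ℝ) x ∂μ
        = ∫ x in S, (u k : Ω → ℝ) x ∂μ
          + ∫ x in S, ((u g : Ω → ℝ) x - (u k : Ω → ℝ) x) ∂μ := by
      rw [integral_sub (hInt.restrict) ((L1.integrable_coeFn (u k)).restrict)]
      ring
    rw [hsplit, hI1, zero_add]
    exact hI2.trans_eq hI3
  -- the bound tends to 0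
  have hlim : Tendsto (fun n : ℕ => ∫ y, (|(h : α₀ → ℝ) y| - min |(h : α₀ → ℝ) y| (n:ℝ)) ∂ν₀)
      atTop (nhds 0) := by
    have hmain : Tendsto (fun n : ℕ => ∫ y, (|(h : α₀ → ℝ) y| - min |(h : α₀ → ℝ) y| (n:ℝ)) ∂ν₀)
        atTop (nhds (∫ _ : α₀, (0:ℝ) ∂ν₀)) := by
      refine tendsto_integral_of_dominated_convergence (fun y => |(h : α₀ → ℝ) y|)
        (fun n => ?_) ((L1.integrable_coeFn h).abs) (fun n => ?_) ?_
      · exact ((Lp.stronglyMeasurable h).measurable.abs.sub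
          ((Lp.stronglyMeasurable h).measurable.abs.min measurable_const)).aestronglyMeasurable
      · filter_upwards with y
        have h1 : (0:ℝ) ≤ min |(h : α₀ → ℝ) y| (n:ℝ) := le_min (abs_nonneg _) (by positivity)
        have h2 : min |(h : α₀ → ℝ) y| (n:ℝ) ≤ |(h : α₀ → ℝ) y| := min_le_left _ _
        rw [Real.norm_eq_abs, abs_of_nonneg (by linarith)]
        linarith
      · filter_upwards with y
        have hev : (fun n : ℕ => |(h : α₀ → ℝ) y| - min |(h : α₀ → ℝ) y| (n:ℝ))
            =ᶠ[atTop] (fun _ => (0:ℝ)) := by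
          filter_upwards [eventually_ge_atTop ⌈|(h : α₀ → ℝ) y|⌉₊] with n hn
          have : |(h : α₀ → ℝ) y| ≤ (n:ℝ) := le_trans (Nat.le_ceil _) (by exact_mod_cast hn)
          rw [min_eq_left this, sub_self]
        exact Tendsto.congr' (hev.symm) tendsto_const_nhds
    simpa using hmain
  have hA_le : ∫ x in S, (u g : Ω → ℝ) x ∂μ ≤ 0 := ge_of_tendsto' hlim key
  have hA_ge : 0 ≤ ∫ x in S, (u g : Ω → ℝ) x ∂μ :=
    integral_nonneg_of_ae (ae_restrict_of_ae hpos)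
  have hA0 : ∫ x in S, (u g : Ω → ℝ) x ∂μ = 0 := le_antisymm hA_le hA_ge
  have := (integral_eq_zero_iff_of_nonneg_ae (ae_restrict_of_ae hpos) hInt.restrict).mp hA0
  exact (ae_restrict_iff' hSm).mp this

end Aux

/-- Renormalization of a lattice isometric embedding into `L₁` of a finite
measure: if `u : L₁(ν₀) → L₁(μ)` is a lattice isometric embedding from `L₁` of
a probability measure sending the constant function `1` to (the class of)
`𝕀`, and `μ̃` is the measure with density `𝕀` with respect to `μ` (which is
carried by the support of `𝕀`), then `h ↦ (u(h)/𝕀)|_{supp 𝕀}` defines a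
lattice isometric embedding `u2 : L₁(ν₀) → L₁(μ̃)` which is measure preserving:
`∫ u2(h) dμ̃ = ∫ h dν₀` for all `h`. -/
theorem renormalized_embedding {Ω α₀ : Type}
    [MeasurableSpace Ω] [MeasurableSpace α₀]
    (μ : Measure Ω) [IsFiniteMeasure μ] (ν₀ : Measure α₀)
    [IsProbabilityMeasure ν₀]
    (u : Lp ℝ 1 ν₀ →ₗᵢ[ℝ] Lp ℝ 1 μ)
    (hu : ∀ f g : Lp ℝ 1 ν₀, u (f ⊔ g) = u f ⊔ u g)
    (𝕀 : Ω → ℝ) (h𝕀 : (u (MemLp.toLp (fun _ => (1:ℝ)) (memLp_const 1)) : Ω → ℝ) =ᵐ[μ] 𝕀) :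
    ∃ u2 : Lp ℝ 1 ν₀ →ₗᵢ[ℝ] Lp ℝ 1 (μ.withDensity (fun x => ENNReal.ofReal (𝕀 x))),
      (∀ f g : Lp ℝ 1 ν₀, u2 (f ⊔ g) = u2 f ⊔ u2 g) ∧
      (∀ h : Lp ℝ 1 ν₀,
        (u2 h : Ω → ℝ) =ᵐ[μ.withDensity (fun x => ENNReal.ofReal (𝕀 x))]
          fun x => if 𝕀 x ≠ 0 then (u h : Ω → ℝ) x / 𝕀 x else 0) ∧
      (∀ h : Lp ℝ 1 ν₀,
        ∫ x, (u2 h : Ω → ℝ) x ∂(μ.withDensity (fun x => ENNReal.ofReal (𝕀 x))) =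
          ∫ y, (h : α₀ → ℝ) y ∂ν₀) := by
  classical
  set one : Lp ℝ 1 ν₀ := MemLp.toLp (fun _ => (1:ℝ)) (memLp_const 1) with hone
  set J : Ω → ℝ := ⇑(u one) with hJdef
  set ν : Measure Ω := μ.withDensity (fun x => ENNReal.ofReal (𝕀 x)) with hνdef
  have hJm : Measurable J := (Lp.stronglyMeasurable (u one)).measurable
  have hJ0 : 0 ≤ᵐ[μ] J := (Lp.coeFn_nonneg _).mpr (u_nonneg u hu one (one_nonneg u hu))
  have hν' : ν = μ.withDensity (fun x => ENNReal.ofReal (J x)) :=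
    withDensity_congr_ae (h𝕀.mono fun x hx => by simp only [← hx])
  have hac : ν ≪ μ := by
    rw [hν']; exact withDensity_absolutelyContinuous μ _
  set w : Lp ℝ 1 ν₀ → Ω → ℝ := fun h x => (u h : Ω → ℝ) x / J x with hwdef
  have hwm : ∀ h : Lp ℝ 1 ν₀, StronglyMeasurable (w h) :=
    fun h => ((Lp.stronglyMeasurable (u h)).measurable.div (Lp.stronglyMeasurable (u one)).measurable).stronglyMeasurable
  -- eLpNorm identity
  have heLp : ∀ h : Lp ℝ 1 ν₀, eLpNorm (w h) 1 ν = eLpNorm (⇑(u h)) 1 μ := by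
    intro h
    rw [hν', eLpNorm_one_eq_lintegral_enorm, eLpNorm_one_eq_lintegral_enorm,
      lintegral_withDensity_eq_lintegral_mul μ hJm.ennreal_ofReal
        ((hwm h).measurable.enorm)]
    refine lintegral_congr_ae ?_
    filter_upwards [hJ0, vanish u hu h] with x h0 h1
    show ENNReal.ofReal (J x) * (‖w h x‖₊ : ℝ≥0∞) = (‖(u h : Ω → ℝ) x‖₊ : ℝ≥0∞)
    rcases eq_or_lt_of_le h0 with hx | hx
    · have hJx : J x = 0 := hx.symm
      have hux : (u h : Ω → ℝ) x = 0 := h1 hJx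
      simp [hwdef, hJx, hux]
    · rw [← enorm_eq_nnnorm, ← enorm_eq_nnnorm, Real.enorm_eq_ofReal_abs, Real.enorm_eq_ofReal_abs, hwdef]
      show ENNReal.ofReal (J x) * ENNReal.ofReal |(u h : Ω → ℝ) x / J x| = _
      rw [abs_div, abs_of_pos hx, ← ENNReal.ofReal_mul h0,
        mul_comm, div_mul_cancel₀ _ hx.ne']
  have hmem : ∀ h : Lp ℝ 1 ν₀, MemLp (w h) 1 ν := by
    intro h
    refine ⟨(hwm h).aestronglyMeasurable, ?_⟩
    rw [heLp h]
    exact Lp.eLpNorm_lt_top (u h)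
  set U0 : Lp ℝ 1 ν₀ → Lp ℝ 1 ν := fun h => (hmem h).toLp (w h) with hU0def
  have hUcoe : ∀ h : Lp ℝ 1 ν₀, ⇑(U0 h) =ᵐ[ν] w h := fun h => MemLp.coeFn_toLp _
  have hadd : ∀ f g : Lp ℝ 1 ν₀, U0 (f + g) = U0 f + U0 g := by
    intro f g
    rw [hU0def, ← MemLp.toLp_add]
    refine MemLp.toLp_congr _ _ ?_
    have : ⇑(u (f + g)) =ᵐ[μ] fun x => (u f : Ω → ℝ) x + (u g : Ω → ℝ) x := by
      rw [map_add]; exact Lp.coeFn_add (u f) (u g)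
    filter_upwards [hac.ae_le this] with x hx
    show (u (f+g) : Ω → ℝ) x / J x = (u f : Ω → ℝ) x / J x + (u g : Ω → ℝ) x / J x
    rw [hx, add_div]
  have hsmul : ∀ (r : ℝ) (f : Lp ℝ 1 ν₀), U0 (r • f) = r • U0 f := by
    intro r f
    rw [hU0def, ← MemLp.toLp_const_smul]
    refine MemLp.toLp_congr _ _ ?_
    have : ⇑(u (r • f)) =ᵐ[μ] fun x => r * (u f : Ω → ℝ) x := by
      rw [u.map_smul]
      filter_upwards [Lp.coeFn_smul r (u f)] with x hx
      rw [hx]; rfl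
    filter_upwards [hac.ae_le this] with x hx
    show (u (r • f) : Ω → ℝ) x / J x = r • ((u f : Ω → ℝ) x / J x)
    rw [hx, smul_eq_mul, mul_div_assoc]
  have hnorm : ∀ h : Lp ℝ 1 ν₀, ‖U0 h‖ = ‖h‖ := by
    intro h
    rw [hU0def]
    rw [Lp.norm_toLp, heLp h, ← Lp.norm_def, u.norm_map]
  have hsup : ∀ f g : Lp ℝ 1 ν₀, U0 (f ⊔ g) = U0 f ⊔ U0 g := by
    intro f g
    apply Lp.ext
    have h3 : ⇑(u (f ⊔ g)) =ᵐ[μ] fun x => max ((u f : Ω → ℝ) x) ((u g : Ω → ℝ) x) := by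
      rw [hu]; exact Lp.coeFn_sup (u f) (u g)
    filter_upwards [hUcoe (f ⊔ g), Lp.coeFn_sup (U0 f) (U0 g), hUcoe f, hUcoe g,
      hac.ae_le h3, hac.ae_le hJ0] with x e1 e2 ef eg e3 e4
    rw [e1, e2, Pi.sup_apply, ef, eg]
    show w (f ⊔ g) x = max (w f x) (w g x)
    rw [hwdef]
    show (u (f ⊔ g) : Ω → ℝ) x / J x = max ((u f : Ω → ℝ) x / J x) ((u g : Ω → ℝ) x / J x)
    rw [e3, max_div_div_right e4]
  have haeid : ∀ h : Lp ℝ 1 ν₀,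
      ⇑(U0 h) =ᵐ[ν] fun x => if 𝕀 x ≠ 0 then (u h : Ω → ℝ) x / 𝕀 x else 0 := by
    intro h
    filter_upwards [hUcoe h, hac.ae_le h𝕀] with x e1 e2
    rw [e1]
    show w h x = if 𝕀 x ≠ 0 then (u h : Ω → ℝ) x / 𝕀 x else 0
    by_cases hx : 𝕀 x = 0
    · simp only [hx, ne_eq, not_true_eq_false, if_false]
      show (u h : Ω → ℝ) x / J x = 0
      rw [e2, hx]
      exact div_zero _
    · simp only [ne_eq, hx, not_false_eq_true, if_true]
      show (u h : Ω → ℝ) x / J x = (u h : Ω → ℝ) x / 𝕀 x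
      rw [e2]
  have hint : ∀ h : Lp ℝ 1 ν₀, ∫ x, (U0 h : Ω → ℝ) x ∂ν = ∫ y, (h : α₀ → ℝ) y ∂ν₀ := by
    intro h
    have e1 : ∫ x, (U0 h : Ω → ℝ) x ∂ν = ∫ x, w h x ∂ν := integral_congr_ae (hUcoe h)
    have e2 : ∫ x, w h x ∂ν = ∫ x, (u h : Ω → ℝ) x ∂μ := by
      rw [hν']
      have hd : (fun x => ENNReal.ofReal (J x))
          = fun x => (((fun x => (J x).toNNReal) x : ℝ≥0) : ℝ≥0∞) := rfl
      rw [hd, integral_withDensity_eq_integral_smul hJm.real_toNNReal (w h)]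
      refine integral_congr_ae ?_
      filter_upwards [hJ0, vanish u hu h] with x h0 h1
      show (J x).toNNReal • w h x = (u h : Ω → ℝ) x
      rcases eq_or_lt_of_le h0 with hx | hx
      · have hJx : J x = 0 := hx.symm
        rw [h1 hJx]
        simp [hwdef, hJx]
      · rw [NNReal.smul_def, Real.coe_toNNReal _ h0]
        show J x * ((u h : Ω → ℝ) x / J x) = (u h : Ω → ℝ) x
        rw [mul_comm, div_mul_cancel₀ _ hx.ne']
    have key : ∀ f : Lp ℝ 1 ν₀, 0 ≤ f →
        ∫ x, (u f : Ω → ℝ) x ∂μ = ∫ y, (f : α₀ → ℝ) y ∂ν₀ := by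
      intro f hf
      rw [← norm_nonneg_L1 _ (u_nonneg u hu f hf), ← norm_nonneg_L1 _ hf, u.norm_map]
    have e3 : ∫ x, (u h : Ω → ℝ) x ∂μ = ∫ y, (h : α₀ → ℝ) y ∂ν₀ := by
      have hdec : u h = u h⁺ - u h⁻ := by
        conv_lhs => rw [← posPart_sub_negPart h]
        rw [map_sub]
      have hdec₀ : (h : Lp ℝ 1 ν₀) = h⁺ - h⁻ := (posPart_sub_negPart h).symm
      calc ∫ x, (u h : Ω → ℝ) x ∂μ
          = ∫ x, ((u h⁺ : Ω → ℝ) x - (u h⁻ : Ω → ℝ) x) ∂μ := by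
            refine integral_congr_ae ?_
            rw [hdec]; exact Lp.coeFn_sub (u h⁺) (u h⁻)
        _ = ∫ x, (u h⁺ : Ω → ℝ) x ∂μ - ∫ x, (u h⁻ : Ω → ℝ) x ∂μ :=
            integral_sub (L1.integrable_coeFn _) (L1.integrable_coeFn _)
        _ = ∫ y, ((h⁺ : Lp ℝ 1 ν₀) : α₀ → ℝ) y ∂ν₀ - ∫ y, ((h⁻ : Lp ℝ 1 ν₀) : α₀ → ℝ) y ∂ν₀ := by
            rw [key _ (posPart_nonneg h), key _ (negPart_nonneg h)]
        _ = ∫ y, (((h⁺ : Lp ℝ 1 ν₀) : α₀ → ℝ) y - ((h⁻ : Lp ℝ 1 ν₀) : α₀ → ℝ) y) ∂ν₀ :=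
            (integral_sub (L1.integrable_coeFn _) (L1.integrable_coeFn _)).symm
        _ = ∫ y, (h : α₀ → ℝ) y ∂ν₀ := by
            refine integral_congr_ae ?_
            conv_rhs => rw [hdec₀]
            exact (Lp.coeFn_sub h⁺ h⁻).symm
    rw [e1, e2, e3]
  exact ⟨⟨⟨⟨U0, hadd⟩, hsmul⟩, hnorm⟩, hsup, haeid, hint⟩
end

section
/- Given Banach lattices X₀, X₁, X₂ and lattice homomorphisms T_i : X₀ → X_i for i = 1,2, there exists a Banach lattice PO and lattice homomorphisms S₁ : X₁ → PO and S₂ : X₂ → PO of norm at most 1 with S₁T₁ = S₂T₂, satisfying the universal property: for any Banach lattice Y and lattice homomorphisms R_i : X_i → Y with R₁T₁ = R₂T₂, there is a unique lattice homomorphism γ : PO → Y with γS_i = R_i for i = 1,2, and ‖γ‖ ≤ max{‖R₁‖, ‖R₂‖}. -/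
open scoped ENNReal
section LpLattice
variable {ι : Type} {E : ι → Type} [∀ i, NormedAddCommGroup (E i)] [∀ i, Lattice (E i)]
    [∀ i, HasSolidNorm (E i)] [∀ i, IsOrderedAddMonoid (E i)]

lemma abs_sup_le_abs_add_abs {W : Type*} [NormedAddCommGroup W] [Lattice W] [HasSolidNorm W] [IsOrderedAddMonoid W] (a b : W) :
    |a ⊔ b| ≤ |a| + |b| := by
  rw [abs_le']
  refine ⟨sup_le (le_trans (le_abs_self _) (le_add_of_nonneg_right (abs_nonneg _)))
      (le_trans (le_abs_self _) (le_add_of_nonneg_left (abs_nonneg _))), ?_⟩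
  rw [neg_sup]
  exact inf_le_left.trans ((neg_le_abs _).trans (le_add_of_nonneg_right (abs_nonneg _)))

lemma norm_sup_le_add' {W : Type*} [NormedAddCommGroup W] [Lattice W] [HasSolidNorm W] [IsOrderedAddMonoid W] (a b : W) :
    ‖a ⊔ b‖ ≤ ‖a‖ + ‖b‖ := by
  calc ‖a ⊔ b‖ ≤ ‖|a| + |b|‖ := HasSolidNorm.solid (by
        rw [abs_of_nonneg (add_nonneg (abs_nonneg a) (abs_nonneg b))]
        exact abs_sup_le_abs_add_abs a b)
    _ ≤ ‖|a|‖ + ‖|b|‖ := norm_add_le _ _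
    _ = ‖a‖ + ‖b‖ := by rw [norm_abs_eq_norm, norm_abs_eq_norm]

lemma memℓp_sup {f g : ∀ i, E i} (hf : Memℓp f ∞) (hg : Memℓp g ∞) :
    Memℓp (fun i => f i ⊔ g i) ∞ := by
  rw [memℓp_infty_iff] at hf hg ⊢
  obtain ⟨Cf, hCf⟩ := hf; obtain ⟨Cg, hCg⟩ := hg
  refine ⟨Cf + Cg, ?_⟩
  rintro - ⟨i, rfl⟩
  exact le_trans (norm_sup_le_add' _ _) (add_le_add (hCf ⟨i, rfl⟩) (hCg ⟨i, rfl⟩))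

lemma memℓp_inf {f g : ∀ i, E i} (hf : Memℓp f ∞) (hg : Memℓp g ∞) :
    Memℓp (fun i => f i ⊓ g i) ∞ := by
  have h2 := (memℓp_sup hf.neg hg.neg).neg
  have : (-fun i => (-f) i ⊔ (-g) i) = fun i => f i ⊓ g i := by
    funext i
    simp [neg_sup]
  rwa [this] at h2

noncomputable instance : Lattice (lp E ∞) where
  le f g := ∀ i, f i ≤ g i
  le_refl f i := le_rfl
  le_trans f g h hfg hgh i := (hfg i).trans (hgh i)
  le_antisymm f g h h' := lp.ext (funext fun i => le_antisymm (h i) (h' i))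
  sup f g := ⟨fun i => f i ⊔ g i, memℓp_sup (lp.memℓp f) (lp.memℓp g)⟩
  le_sup_left f g i := le_sup_left
  le_sup_right f g i := le_sup_right
  sup_le f g h hfh hgh i := sup_le (hfh i) (hgh i)
  inf f g := ⟨fun i => f i ⊓ g i, memℓp_inf (lp.memℓp f) (lp.memℓp g)⟩
  inf_le_left f g i := inf_le_left
  inf_le_right f g i := inf_le_right
  le_inf f g h hfg hfh i := le_inf (hfg i) (hfh i)

@[simp] lemma lp_sup_apply (f g : lp E ∞) (i : ι) : (f ⊔ g) i = f i ⊔ g i := rfl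
@[simp] lemma lp_inf_apply (f g : lp E ∞) (i : ι) : (f ⊓ g) i = f i ⊓ g i := rfl
lemma lp_le_iff (f g : lp E ∞) : f ≤ g ↔ ∀ i, f i ≤ g i := Iff.rfl

lemma lp_abs_apply (u : lp E ∞) (i : ι) : |u| i = |u i| := by
  have h1 : |u| = u ⊔ -u := rfl
  have h2 : (-u) i = -(u i) := by rw [lp.coeFn_neg]; rfl
  rw [h1, lp_sup_apply, h2]; rfl

noncomputable instance : IsOrderedAddMonoid (lp E ∞) where
  add_le_add_left f g h c i := by
    have h1 : (f + c) i = f i + c i := by rw [lp.coeFn_add]; rfl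
    have h2 : (g + c) i = g i + c i := by rw [lp.coeFn_add]; rfl
    rw [h1, h2]
    exact add_le_add (h i) le_rfl

noncomputable instance : HasSolidNorm (lp E ∞) where
  solid f g h := by
    apply lp.norm_le_of_forall_le (norm_nonneg g)
    intro i
    refine le_trans (HasSolidNorm.solid ?_) (lp.norm_apply_le_norm ENNReal.top_ne_zero g i)
    rw [← lp_abs_apply f i, ← lp_abs_apply g i]
    exact h i

end LpLattice


/-- Formal lattice-linear terms over `X₁ ⊕ X₂`. -/
inductive PushTerm (X₁ X₂ : Type) : Type
  | of : X₁ ⊕ X₂ → PushTerm X₁ X₂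
  | add : PushTerm X₁ X₂ → PushTerm X₁ X₂ → PushTerm X₁ X₂
  | smul : ℝ → PushTerm X₁ X₂ → PushTerm X₁ X₂
  | sup : PushTerm X₁ X₂ → PushTerm X₁ X₂ → PushTerm X₁ X₂

namespace PushTerm

variable {X₁ X₂ : Type} {W : Type*} [NormedAddCommGroup W] [Lattice W] [HasSolidNorm W] [IsOrderedAddMonoid W] [NormedSpace ℝ W]

/-- Evaluation of a term. -/
noncomputable def eval (φ : X₁ ⊕ X₂ → W) : PushTerm X₁ X₂ → W
  | of z => φ z
  | add s t => eval φ s + eval φ t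
  | smul r t => r • eval φ t
  | sup s t => eval φ s ⊔ eval φ t

variable [AddCommGroup X₁]

/-- The (non-closed) sublattice-submodule generated by the range of `φ`. -/
noncomputable def genSub (φ : X₁ ⊕ X₂ → W) : Submodule ℝ W where
  carrier := Set.range (eval φ)
  add_mem' := by rintro a b ⟨s, rfl⟩ ⟨t, rfl⟩; exact ⟨add s t, rfl⟩
  zero_mem' := ⟨smul 0 (of (Sum.inl 0)), by simp [eval]⟩
  smul_mem' := by rintro c a ⟨t, rfl⟩; exact ⟨smul c t, rfl⟩

lemma genSub_sup_mem (φ : X₁ ⊕ X₂ → W) {a b : W} (ha : a ∈ genSub φ) (hb : b ∈ genSub φ) :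
    a ⊔ b ∈ genSub φ := by
  obtain ⟨s, rfl⟩ := ha; obtain ⟨t, rfl⟩ := hb; exact ⟨sup s t, rfl⟩

/-- The closed sublattice-submodule generated by the range of `φ`. -/
noncomputable def genClosed (φ : X₁ ⊕ X₂ → W) : Submodule ℝ W :=
  (genSub φ).topologicalClosure

lemma genClosed_isClosed (φ : X₁ ⊕ X₂ → W) : IsClosed (genClosed φ : Set W) :=
  (genSub φ).isClosed_topologicalClosure

lemma genClosed_sup_mem (φ : X₁ ⊕ X₂ → W) (a b : W)
    (ha : a ∈ genClosed φ) (hb : b ∈ genClosed φ) : a ⊔ b ∈ genClosed φ := by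
  have : a ⊔ b ∈ closure (genSub φ : Set W) := by
    exact map_mem_closure₂ (s := (genSub φ : Set W)) (t := (genSub φ : Set W))
      continuous_sup ha hb (fun _ hx _ hy => genSub_sup_mem φ hx hy)
  exact this

lemma eval_mem_genClosed (φ : X₁ ⊕ X₂ → W) (t : PushTerm X₁ X₂) :
    eval φ t ∈ genClosed φ :=
  (genSub φ).le_topologicalClosure ⟨t, rfl⟩

/-- Every element of the generated closed sublattice is determined by a sequence of terms,
giving an injection into `ℕ → PushTerm X₁ X₂`. -/
lemma exists_injection_genClosed (φ : X₁ ⊕ X₂ → W) :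
    ∃ e : ↥(genClosed φ) → (ℕ → PushTerm X₁ X₂), Function.Injective e := by
  have h : ∀ y : ↥(genClosed φ), ∃ u : ℕ → PushTerm X₁ X₂,
      Filter.Tendsto (fun n => eval φ (u n)) Filter.atTop (nhds (y : W)) := by
    intro y
    have hy : (y : W) ∈ closure (genSub φ : Set W) := y.2
    rw [mem_closure_iff_seq_limit] at hy
    obtain ⟨x, hx, hlim⟩ := hy
    choose t ht using hx
    exact ⟨t, by simpa only [ht] using hlim⟩
  choose e he using h
  refine ⟨e, fun y y' hee => ?_⟩
  apply Subtype.ext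
  apply tendsto_nhds_unique (he y)
  rw [hee]
  exact he y'

end PushTerm


section Sublattice
variable {W : Type*} [NormedAddCommGroup W] [Lattice W] [HasSolidNorm W] [IsOrderedAddMonoid W] [NormedSpace ℝ W]
variable (K : Submodule ℝ W)

/-- Lattice structure on a sup-closed submodule. -/
noncomputable def subLattice (hsup : ∀ a b : W, a ∈ K → b ∈ K → a ⊔ b ∈ K) :
    Lattice ↥K where
  le x y := (x : W) ≤ y
  lt x y := (x : W) < y
  lt_iff_le_not_ge x y := lt_iff_le_not_ge
  le_refl x := le_rfl
  le_trans x y z h h' := le_trans h h'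
  le_antisymm x y h h' := Subtype.ext (le_antisymm h h')
  sup x y := ⟨(x : W) ⊔ y, hsup _ _ x.2 y.2⟩
  le_sup_left x y := le_sup_left (a := (x:W))
  le_sup_right x y := le_sup_right (a := (x:W))
  sup_le x y z h h' := sup_le h h'
  inf x y := ⟨(x : W) ⊓ y, by
    have : (x : W) ⊓ y = x + y - ((x:W) ⊔ y) := by
      rw [eq_sub_iff_add_eq, inf_add_sup]
    rw [this]
    exact sub_mem (add_mem x.2 y.2) (hsup _ _ x.2 y.2)⟩
  inf_le_left x y := inf_le_left (a := (x:W))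
  inf_le_right x y := inf_le_right (a := (x:W))
  le_inf x y z h h' := le_inf h h'

noncomputable def subOAM (hsup : ∀ a b : W, a ∈ K → b ∈ K → a ⊔ b ∈ K) :
    letI := subLattice K hsup
    IsOrderedAddMonoid ↥K :=
  letI L := subLattice K hsup
  { add_le_add_left := fun a b h c => by
      show ((a + c : ↥K) : W) ≤ (b + c : ↥K)
      push_cast
      exact add_le_add h le_rfl }

noncomputable def subNLat (hsup : ∀ a b : W, a ∈ K → b ∈ K → a ⊔ b ∈ K) :
    letI := subLattice K hsup
    HasSolidNorm ↥K :=
  letI L := subLattice K hsup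
  { solid := fun a b h => by
      show ‖(a : W)‖ ≤ ‖(b : W)‖
      apply HasSolidNorm.solid
      have habs : ∀ u : ↥K, ((|u| : ↥K) : W) = |(u : W)| := fun u => rfl
      rw [← habs a, ← habs b]
      exact h }


end Sublattice


structure PushIdx (X₀ X₁ X₂ : Type)
    [NormedAddCommGroup X₀] [Lattice X₀] [HasSolidNorm X₀] [IsOrderedAddMonoid X₀] [NormedSpace ℝ X₀]
    [NormedAddCommGroup X₁] [Lattice X₁] [HasSolidNorm X₁] [IsOrderedAddMonoid X₁] [NormedSpace ℝ X₁]
    [NormedAddCommGroup X₂] [Lattice X₂] [HasSolidNorm X₂] [IsOrderedAddMonoid X₂] [NormedSpace ℝ X₂]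
    (T₁ : X₀ →L[ℝ] X₁) (T₂ : X₀ →L[ℝ] X₂) : Type where
  s : Set (ℕ → PushTerm X₁ X₂)
  [ng : NormedAddCommGroup ↥s]
  [la : Lattice ↥s]
  [sn : HasSolidNorm ↥s]
  [om : IsOrderedAddMonoid ↥s]
  [ns : NormedSpace ℝ ↥s]
  [cs : CompleteSpace ↥s]
  r₁ : X₁ →L[ℝ] ↥s
  r₂ : X₂ →L[ℝ] ↥s
  hl₁ : ∀ a b : X₁, r₁ (a ⊔ b) = r₁ a ⊔ r₁ b
  hl₂ : ∀ a b : X₂, r₂ (a ⊔ b) = r₂ a ⊔ r₂ b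
  hn₁ : ‖r₁‖ ≤ 1
  hn₂ : ‖r₂‖ ≤ 1
  hcm : ∀ z : X₀, r₁ (T₁ z) = r₂ (T₂ z)

variable {X₀ X₁ X₂ : Type}
    [NormedAddCommGroup X₀] [Lattice X₀] [HasSolidNorm X₀] [IsOrderedAddMonoid X₀] [NormedSpace ℝ X₀]
    [NormedAddCommGroup X₁] [Lattice X₁] [HasSolidNorm X₁] [IsOrderedAddMonoid X₁] [NormedSpace ℝ X₁]
    [NormedAddCommGroup X₂] [Lattice X₂] [HasSolidNorm X₂] [IsOrderedAddMonoid X₂] [NormedSpace ℝ X₂]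
    {T₁ : X₀ →L[ℝ] X₁} {T₂ : X₀ →L[ℝ] X₂}

instance (i : PushIdx X₀ X₁ X₂ T₁ T₂) : NormedAddCommGroup ↥i.s := i.ng
instance (i : PushIdx X₀ X₁ X₂ T₁ T₂) : Lattice ↥i.s := i.la
instance (i : PushIdx X₀ X₁ X₂ T₁ T₂) : HasSolidNorm ↥i.s := i.sn
instance (i : PushIdx X₀ X₁ X₂ T₁ T₂) : IsOrderedAddMonoid ↥i.s := i.om
instance (i : PushIdx X₀ X₁ X₂ T₁ T₂) : NormedSpace ℝ ↥i.s := i.ns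
instance (i : PushIdx X₀ X₁ X₂ T₁ T₂) : CompleteSpace ↥i.s := i.cs

noncomputable def mkPack {Y' : Type} [NormedAddCommGroup Y'] [Lattice Y'] [HasSolidNorm Y'] [IsOrderedAddMonoid Y'] [NormedSpace ℝ Y']
    [CompleteSpace Y'] (e : Y' → (ℕ → PushTerm X₁ X₂)) (he : Function.Injective e)
    (c : ℝ) (hc : 0 < c)
    (R₁ : X₁ →L[ℝ] Y') (R₂ : X₂ →L[ℝ] Y')
    (hl₁ : ∀ a b : X₁, R₁ (a ⊔ b) = R₁ a ⊔ R₁ b)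
    (hl₂ : ∀ a b : X₂, R₂ (a ⊔ b) = R₂ a ⊔ R₂ b)
    (hb₁ : ∀ x, ‖R₁ x‖ ≤ c * ‖x‖) (hb₂ : ∀ x, ‖R₂ x‖ ≤ c * ‖x‖)
    (hcm : ∀ z, R₁ (T₁ z) = R₂ (T₂ z)) :
    Σ' (i : PushIdx X₀ X₁ X₂ T₁ T₂) (ψ : ↥i.s → Y'),
      (∀ x, ψ (i.r₁ x) = R₁ x) ∧ (∀ x, ψ (i.r₂ x) = R₂ x) ∧
      (∀ a b : ↥i.s, ψ (a ⊔ b) = ψ a ⊔ ψ b) ∧ (∀ v : ↥i.s, ‖ψ v‖ = c * ‖v‖) ∧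
      (∀ v w : ↥i.s, ψ (v + w) = ψ v + ψ w) ∧ (∀ (r : ℝ) (v : ↥i.s), ψ (r • v) = r • ψ v) := by
  classical
  set S := ↥(Set.range e) with hS
  letI g : S ≃ Y' := (Equiv.ofInjective e he).symm
  letI : AddCommGroup S := g.addCommGroup
  letI : Module ℝ S := g.module ℝ
  letI gLin : S ≃ₗ[ℝ] Y' := g.linearEquiv ℝ
  have hg : ∀ v : S, gLin v = g v := fun _ => rfl
  have hgadd : ∀ v w : S, g (v + w) = g v + g w := fun v w => map_add gLin v w
  have hgsmul : ∀ (r : ℝ) (v : S), g (r • v) = r • g v := fun r v => map_smul gLin r v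
  have hgzero : g 0 = 0 := map_zero gLin
  have hgneg : ∀ v : S, g (-v) = -(g v) := fun v => map_neg gLin v
  have hgsub : ∀ v w : S, g (v - w) = g v - g w := fun v w => map_sub gLin v w
  letI : NormedAddCommGroup S := AddGroupNorm.toNormedAddCommGroup
    { toFun := fun v => c⁻¹ * ‖g v‖
      map_zero' := by simp only [hgzero, norm_zero, mul_zero]
      add_le' := fun v w => by
        rw [hgadd]
        calc c⁻¹ * ‖g v + g w‖ ≤ c⁻¹ * (‖g v‖ + ‖g w‖) :=
              mul_le_mul_of_nonneg_left (norm_add_le _ _) (inv_nonneg.mpr hc.le)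
          _ = c⁻¹ * ‖g v‖ + c⁻¹ * ‖g w‖ := by ring
      neg' := fun v => by rw [hgneg, norm_neg]
      eq_zero_of_map_eq_zero' := fun v hv => by
        have : ‖g v‖ = 0 := by
          rcases mul_eq_zero.mp hv with h | h
          · exact absurd h (inv_ne_zero hc.ne')
          · exact h
        apply g.injective
        rw [hgzero]
        exact norm_eq_zero.mp this }
  have hnorm : ∀ v : S, ‖v‖ = c⁻¹ * ‖g v‖ := fun _ => rfl
  have hgnorm : ∀ v : S, ‖g v‖ = c * ‖v‖ := fun v => by
    rw [hnorm, ← mul_assoc, mul_inv_cancel₀ hc.ne', one_mul]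
  letI : NormedSpace ℝ S :=
    { norm_smul_le := fun r v => by
        rw [hnorm, hgsmul, norm_smul, hnorm]
        ring_nf
        exact le_rfl }
  letI : Lattice S :=
    { le := fun v w => g v ≤ g w
      lt := fun v w => g v < g w
      lt_iff_le_not_ge := fun v w => lt_iff_le_not_ge
      le_refl := fun v => le_rfl
      le_trans := fun u v w h h' => le_trans h h'
      le_antisymm := fun v w h h' => g.injective (le_antisymm h h')
      sup := fun v w => g.symm (g v ⊔ g w)
      le_sup_left := fun v w => by
        show g v ≤ g (g.symm (g v ⊔ g w))
        rw [g.apply_symm_apply]; exact le_sup_left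
      le_sup_right := fun v w => by
        show g w ≤ g (g.symm (g v ⊔ g w))
        rw [g.apply_symm_apply]; exact le_sup_right
      sup_le := fun u v w h h' => by
        show g (g.symm (g u ⊔ g v)) ≤ g w
        rw [g.apply_symm_apply]; exact sup_le h h'
      inf := fun v w => g.symm (g v ⊓ g w)
      inf_le_left := fun v w => by
        show g (g.symm (g v ⊓ g w)) ≤ g v
        rw [g.apply_symm_apply]; exact inf_le_left
      inf_le_right := fun v w => by
        show g (g.symm (g v ⊓ g w)) ≤ g w
        rw [g.apply_symm_apply]; exact inf_le_right
      le_inf := fun u v w h h' => by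
        show g u ≤ g (g.symm (g v ⊓ g w))
        rw [g.apply_symm_apply]; exact le_inf h h' }
  have hgsup : ∀ v w : S, g (v ⊔ w) = g v ⊔ g w := fun v w => g.apply_symm_apply _
  have hgabs : ∀ v : S, g |v| = |g v| := fun v => by
    have h1 : |v| = v ⊔ -v := rfl
    have h2 : |g v| = g v ⊔ -(g v) := rfl
    rw [h1, h2, hgsup, hgneg]
  letI : IsOrderedAddMonoid S :=
    { add_le_add_left := fun a b h d => by
        show g (a + d) ≤ g (b + d)
        rw [hgadd, hgadd]
        have h' : g a ≤ g b := h
        exact add_le_add h' le_rfl }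
  letI : HasSolidNorm S :=
    { solid := fun a b h => by
        rw [hnorm, hnorm]
        refine mul_le_mul_of_nonneg_left ?_ (inv_nonneg.mpr hc.le)
        apply HasSolidNorm.solid
        rw [← hgabs, ← hgabs]
        exact h }
  have hlip : LipschitzWith (Real.toNNReal c) (g : S → Y') :=
    LipschitzWith.of_dist_le_mul fun v w => by
      rw [dist_eq_norm, dist_eq_norm, ← hgsub, hgnorm,
        Real.coe_toNNReal c hc.le]
  have hlip' : LipschitzWith (Real.toNNReal c⁻¹) (g.symm : Y' → S) :=
    LipschitzWith.of_dist_le_mul fun y y' => by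
      rw [dist_eq_norm, dist_eq_norm, hnorm, hgsub, g.apply_symm_apply, g.apply_symm_apply,
        Real.coe_toNNReal _ (inv_nonneg.mpr hc.le)]
  letI gU : S ≃ᵤ Y' :=
    { toEquiv := g
      uniformContinuous_toFun := hlip.uniformContinuous
      uniformContinuous_invFun := hlip'.uniformContinuous }
  letI : CompleteSpace S := gU.completeSpace_iff.mpr inferInstance
  letI r₁ : X₁ →L[ℝ] S := LinearMap.mkContinuous
    { toFun := fun x => g.symm (R₁ x)
      map_add' := fun x y => by
        apply g.injective
        rw [hgadd, g.apply_symm_apply, g.apply_symm_apply, g.apply_symm_apply, map_add]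
      map_smul' := fun r x => by
        apply g.injective
        rw [hgsmul, g.apply_symm_apply, g.apply_symm_apply, map_smul]
        rfl }
    1 (fun x => by
      rw [one_mul]
      show ‖g.symm (R₁ x)‖ ≤ ‖x‖
      rw [hnorm, g.apply_symm_apply, inv_mul_le_iff₀ hc]
      exact hb₁ x)
  letI r₂ : X₂ →L[ℝ] S := LinearMap.mkContinuous
    { toFun := fun x => g.symm (R₂ x)
      map_add' := fun x y => by
        apply g.injective
        rw [hgadd, g.apply_symm_apply, g.apply_symm_apply, g.apply_symm_apply, map_add]
      map_smul' := fun r x => by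
        apply g.injective
        rw [hgsmul, g.apply_symm_apply, g.apply_symm_apply, map_smul]
        rfl }
    1 (fun x => by
      rw [one_mul]
      show ‖g.symm (R₂ x)‖ ≤ ‖x‖
      rw [hnorm, g.apply_symm_apply, inv_mul_le_iff₀ hc]
      exact hb₂ x)
  refine ⟨{ s := Set.range e, r₁ := r₁, r₂ := r₂
            hl₁ := fun a b => ?_, hl₂ := fun a b => ?_
            hn₁ := LinearMap.mkContinuous_norm_le _ zero_le_one _
            hn₂ := LinearMap.mkContinuous_norm_le _ zero_le_one _
            hcm := fun z => ?_ },
          fun v => g v, fun x => g.apply_symm_apply _, fun x => g.apply_symm_apply _,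
          hgsup, hgnorm, hgadd, hgsmul⟩
  · apply g.injective
    rw [hgsup]
    show g (g.symm (R₁ (a ⊔ b))) = g (g.symm (R₁ a)) ⊔ g (g.symm (R₁ b))
    rw [g.apply_symm_apply, g.apply_symm_apply, g.apply_symm_apply, hl₁]
  · apply g.injective
    rw [hgsup]
    show g (g.symm (R₂ (a ⊔ b))) = g (g.symm (R₂ a)) ⊔ g (g.symm (R₂ b))
    rw [g.apply_symm_apply, g.apply_symm_apply, g.apply_symm_apply, hl₂]
  · apply g.injective
    show g (g.symm (R₁ (T₁ z))) = g (g.symm (R₂ (T₂ z)))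
    rw [g.apply_symm_apply, g.apply_symm_apply]
    exact hcm z

/-- A lattice homomorphism between Banach lattices: a bounded linear operator
preserving binary suprema (hence all lattice operations). -/
def IsLatticeHom {X Y : Type} [NormedAddCommGroup X] [Lattice X] [HasSolidNorm X] [IsOrderedAddMonoid X] [NormedSpace ℝ X]
    [NormedAddCommGroup Y] [Lattice Y] [HasSolidNorm Y] [IsOrderedAddMonoid Y] [NormedSpace ℝ Y] (f : X →L[ℝ] Y) : Prop :=
  ∀ a b : X, f (a ⊔ b) = f a ⊔ f b

section Main

open PushTerm

set_option maxHeartbeats 4000000 in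
set_option synthInstance.maxHeartbeats 1000000 in

/-- Existence of push-outs in the category of Banach lattices: given lattice
homomorphisms `T₁ : X₀ → X₁` and `T₂ : X₀ → X₂`, there is a Banach lattice
`PO` and lattice homomorphisms `S₁ : X₁ → PO`, `S₂ : X₂ → PO` of norm at most
`1` with `S₁T₁ = S₂T₂`, such that every pair of lattice homomorphisms
`R᾿ᵢ : Xᵢ → Y` with `R₁T₁ = R₂T₂` factors through a unique lattice homomorphism
`γ : PO → Y` with `γSᵢ = Rᵢ` and `‖γ‖ ≤ max {‖R₁‖, ‖R₂‖}`. -/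
theorem exists_pushout_banach_lattice {X₀ X₁ X₂ : Type}
    [NormedAddCommGroup X₀] [Lattice X₀] [HasSolidNorm X₀] [IsOrderedAddMonoid X₀] [NormedSpace ℝ X₀] [CompleteSpace X₀]
    [NormedAddCommGroup X₁] [Lattice X₁] [HasSolidNorm X₁] [IsOrderedAddMonoid X₁] [NormedSpace ℝ X₁] [CompleteSpace X₁]
    [NormedAddCommGroup X₂] [Lattice X₂] [HasSolidNorm X₂] [IsOrderedAddMonoid X₂] [NormedSpace ℝ X₂] [CompleteSpace X₂]
    (T₁ : X₀ →L[ℝ] X₁) (T₂ : X₀ →L[ℝ] X₂)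
    (hT₁ : IsLatticeHom T₁) (hT₂ : IsLatticeHom T₂) :
    ∃ (PO : Type) (_ : NormedAddCommGroup PO) (_ : Lattice PO) (_ : HasSolidNorm PO)
      (_ : IsOrderedAddMonoid PO) (_ : NormedSpace ℝ PO)
      (_ : CompleteSpace PO) (S₁ : X₁ →L[ℝ] PO) (S₂ : X₂ →L[ℝ] PO),
      IsLatticeHom S₁ ∧ IsLatticeHom S₂ ∧ ‖S₁‖ ≤ 1 ∧ ‖S₂‖ ≤ 1 ∧
      S₁.comp T₁ = S₂.comp T₂ ∧
      ∀ (Y : Type) (_ : NormedAddCommGroup Y) (_ : Lattice Y) (_ : HasSolidNorm Y)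
      (_ : IsOrderedAddMonoid Y) (_ : NormedSpace ℝ Y)
        (_ : CompleteSpace Y) (R₁ : X₁ →L[ℝ] Y) (R₂ : X₂ →L[ℝ] Y),
        IsLatticeHom R₁ → IsLatticeHom R₂ → R₁.comp T₁ = R₂.comp T₂ →
        (∃ γ : PO →L[ℝ] Y, IsLatticeHom γ ∧ γ.comp S₁ = R₁ ∧ γ.comp S₂ = R₂ ∧
            ‖γ‖ ≤ max ‖R₁‖ ‖R₂‖) ∧
          (∀ γ γ' : PO →L[ℝ] Y,
            IsLatticeHom γ → γ.comp S₁ = R₁ → γ.comp S₂ = R₂ →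
            IsLatticeHom γ' → γ'.comp S₁ = R₁ → γ'.comp S₂ = R₂ → γ = γ') := by
  classical
  -- the index type of all "test data"
  let ι := PushIdx X₀ X₁ X₂ T₁ T₂
  let Fam : ι → Type := fun i => ↥i.s
  -- the canonical map into the `ℓ∞`-product
  have memS : ∀ z : X₁ ⊕ X₂,
      Memℓp (fun i : ι => (Sum.elim (fun x => i.r₁ x) (fun x => i.r₂ x) z : Fam i)) ∞ := by
    intro z
    rw [memℓp_infty_iff]
    refine ⟨Sum.elim (fun x => ‖x‖) (fun x => ‖x‖) z, ?_⟩
    rintro - ⟨i, rfl⟩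
    cases z with
    | inl x =>
      exact le_trans (i.r₁.le_opNorm x) (mul_le_of_le_one_left (norm_nonneg x) i.hn₁)
    | inr x =>
      exact le_trans (i.r₂.le_opNorm x) (mul_le_of_le_one_left (norm_nonneg x) i.hn₂)
  let Smap : X₁ ⊕ X₂ → lp Fam ∞ := fun z =>
    ⟨fun i => Sum.elim (fun x => i.r₁ x) (fun x => i.r₂ x) z, memS z⟩
  -- the push-out as the closed sublattice generated by the range of `Smap`
  let KP := PushTerm.genClosed Smap
  let PO := ↥KP
  letI instPOl : Lattice PO := subLattice KP (PushTerm.genClosed_sup_mem Smap)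
  haveI instPO : HasSolidNorm PO := subNLat KP (PushTerm.genClosed_sup_mem Smap)
  haveI instPOo : IsOrderedAddMonoid PO := subOAM KP (PushTerm.genClosed_sup_mem Smap)
  letI instPOns : NormedSpace ℝ PO := inferInstance
  letI instPOc : CompleteSpace PO := (PushTerm.genClosed_isClosed Smap).completeSpace_coe
  -- the maps S₁, S₂
  let S₁lin : X₁ →ₗ[ℝ] PO :=
    { toFun := fun x => ⟨Smap (Sum.inl x), PushTerm.eval_mem_genClosed Smap (.of (Sum.inl x))⟩
      map_add' := fun x y => Subtype.ext (lp.ext (funext fun i => by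
        show i.r₁ (x + y) = (↑(Smap (Sum.inl x) + Smap (Sum.inl y)) : ∀ j, Fam j) i
        rw [lp.coeFn_add]
        show i.r₁ (x + y) = i.r₁ x + i.r₁ y
        exact map_add i.r₁ x y))
      map_smul' := fun r x => Subtype.ext (lp.ext (funext fun i => by
        show i.r₁ (r • x) = (↑(r • Smap (Sum.inl x)) : ∀ j, Fam j) i
        rw [lp.coeFn_smul]
        show i.r₁ (r • x) = r • i.r₁ x
        exact map_smul i.r₁ r x)) }
  let S₂lin : X₂ →ₗ[ℝ] PO :=
    { toFun := fun x => ⟨Smap (Sum.inr x), PushTerm.eval_mem_genClosed Smap (.of (Sum.inr x))⟩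
      map_add' := fun x y => Subtype.ext (lp.ext (funext fun i => by
        show i.r₂ (x + y) = (↑(Smap (Sum.inr x) + Smap (Sum.inr y)) : ∀ j, Fam j) i
        rw [lp.coeFn_add]
        show i.r₂ (x + y) = i.r₂ x + i.r₂ y
        exact map_add i.r₂ x y))
      map_smul' := fun r x => Subtype.ext (lp.ext (funext fun i => by
        show i.r₂ (r • x) = (↑(r • Smap (Sum.inr x)) : ∀ j, Fam j) i
        rw [lp.coeFn_smul]
        show i.r₂ (r • x) = r • i.r₂ x
        exact map_smul i.r₂ r x)) }
  let S₁ : X₁ →L[ℝ] PO := LinearMap.mkContinuous S₁lin 1 (fun x => by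
    rw [one_mul]
    show ‖Smap (Sum.inl x)‖ ≤ ‖x‖
    apply lp.norm_le_of_forall_le (norm_nonneg x)
    intro i
    exact le_trans (i.r₁.le_opNorm x) (mul_le_of_le_one_left (norm_nonneg x) i.hn₁))
  let S₂ : X₂ →L[ℝ] PO := LinearMap.mkContinuous S₂lin 1 (fun x => by
    rw [one_mul]
    show ‖Smap (Sum.inr x)‖ ≤ ‖x‖
    apply lp.norm_le_of_forall_le (norm_nonneg x)
    intro i
    exact le_trans (i.r₂.le_opNorm x) (mul_le_of_le_one_left (norm_nonneg x) i.hn₂))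
  -- the term elements of PO
  let pt : PushTerm X₁ X₂ → PO := fun t =>
    ⟨PushTerm.eval Smap t, PushTerm.eval_mem_genClosed Smap t⟩
  have hpt_of₁ : ∀ x : X₁, pt (.of (Sum.inl x)) = S₁ x := fun x => rfl
  have hpt_of₂ : ∀ x : X₂, pt (.of (Sum.inr x)) = S₂ x := fun x => rfl
  have hpt_add : ∀ s t, pt (.add s t) = pt s + pt t := fun s t => rfl
  have hpt_smul : ∀ (r : ℝ) t, pt (.smul r t) = r • pt t := fun r t => rfl
  have hpt_sup : ∀ s t, pt (.sup s t) = pt s ⊔ pt t := fun s t => rfl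
  refine ⟨PO, inferInstance, instPOl, instPO, instPOo, instPOns, instPOc, S₁, S₂, ?_, ?_,
    LinearMap.mkContinuous_norm_le _ zero_le_one _,
    LinearMap.mkContinuous_norm_le _ zero_le_one _, ?_, ?_⟩
  · -- S₁ lattice hom
    intro a b
    refine Subtype.ext (lp.ext (funext fun i => ?_))
    show i.r₁ (a ⊔ b) = ((Smap (Sum.inl a) ⊔ Smap (Sum.inl b) : lp Fam ∞) : ∀ j, Fam j) i
    show i.r₁ (a ⊔ b) = i.r₁ a ⊔ i.r₁ b
    exact i.hl₁ a b
  · -- S₂ lattice hom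
    intro a b
    refine Subtype.ext (lp.ext (funext fun i => ?_))
    show i.r₂ (a ⊔ b) = i.r₂ a ⊔ i.r₂ b
    exact i.hl₂ a b
  · -- S₁ ∘ T₁ = S₂ ∘ T₂
    refine ContinuousLinearMap.ext fun z => Subtype.ext (lp.ext (funext fun i => ?_))
    show i.r₁ (T₁ z) = i.r₂ (T₂ z)
    exact i.hcm z
  · -- the universal property
    intro Y instY instYl instYs instYo instYns instYc R₁ R₂ hR₁ hR₂ hcomp
    constructor
    · -- existence of γ
      set M := max ‖R₁‖ ‖R₂‖ with hMdef
      have hM0 : (0 : ℝ) ≤ M := le_trans (norm_nonneg R₁) (le_max_left _ _)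
      rcases hM0.eq_or_lt with hM | hM
      · -- degenerate case: R₁ = R₂ = 0
        have hR₁0 : R₁ = 0 := by
          rw [← ContinuousLinearMap.opNorm_zero_iff]
          exact le_antisymm (hM ▸ le_max_left _ _) (norm_nonneg _)
        have hR₂0 : R₂ = 0 := by
          rw [← ContinuousLinearMap.opNorm_zero_iff]
          exact le_antisymm (hM ▸ le_max_right _ _) (norm_nonneg _)
        refine ⟨0, fun a b => by simp, ?_, ?_, by simp [← hM]⟩
        · rw [hR₁0]; ext x; simp
        · rw [hR₂0]; ext x; simp
      · -- main case
        let φ : X₁ ⊕ X₂ → Y := Sum.elim R₁ R₂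
        let KY := PushTerm.genClosed φ
        letI instY'l : Lattice ↥KY := subLattice KY (PushTerm.genClosed_sup_mem φ)
        haveI instY' : HasSolidNorm ↥KY := subNLat KY (PushTerm.genClosed_sup_mem φ)
        haveI instY'o : @IsOrderedAddMonoid ↥KY _ instY'l.toSemilatticeSup.toPartialOrder.toPreorder := subOAM KY (PushTerm.genClosed_sup_mem φ)
        letI instY'c : CompleteSpace ↥KY := (PushTerm.genClosed_isClosed φ).completeSpace_coe
        obtain ⟨e, he⟩ := PushTerm.exists_injection_genClosed φ
        let R₁' : X₁ →L[ℝ] ↥KY := R₁.codRestrict KY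
          (fun x => PushTerm.eval_mem_genClosed φ (.of (Sum.inl x)))
        let R₂' : X₂ →L[ℝ] ↥KY := R₂.codRestrict KY
          (fun x => PushTerm.eval_mem_genClosed φ (.of (Sum.inr x)))
        obtain ⟨i₀, ψ, hψ₁, hψ₂, hψsup, hψnorm, hψadd, hψsmul⟩ :=
          mkPack (T₁ := T₁) (T₂ := T₂) e he M hM R₁' R₂'
            (fun a b => Subtype.ext (hR₁ a b))
            (fun a b => Subtype.ext (hR₂ a b))
            (fun x => le_trans (R₁.le_opNorm x)
              (mul_le_mul_of_nonneg_right (le_max_left _ _) (norm_nonneg x)))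
            (fun x => le_trans (R₂.le_opNorm x)
              (mul_le_mul_of_nonneg_right (le_max_right _ _) (norm_nonneg x)))
            (fun z => Subtype.ext (ContinuousLinearMap.ext_iff.mp hcomp z))
        let L : PO →ₗ[ℝ] Y :=
          { toFun := fun p => ((ψ (((p : lp Fam ∞) : ∀ j, Fam j) i₀) : ↥KY) : Y)
            map_add' := fun p q => by
              have h2 : ((((p : lp Fam ∞) + q) : lp Fam ∞) : ∀ j, Fam j) i₀
                  = ((p : lp Fam ∞) : ∀ j, Fam j) i₀ + ((q : lp Fam ∞) : ∀ j, Fam j) i₀ := by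
                rw [lp.coeFn_add]; rfl
              show ((ψ (((((p : lp Fam ∞) + q) : lp Fam ∞) : ∀ j, Fam j) i₀) : ↥KY) : Y) = _
              rw [h2, hψadd]
              rfl
            map_smul' := fun r p => by
              have h2 : (((r • (p : lp Fam ∞)) : lp Fam ∞) : ∀ j, Fam j) i₀
                  = r • (((p : lp Fam ∞) : ∀ j, Fam j) i₀) := by
                rw [lp.coeFn_smul]; rfl
              show ((ψ ((((r • (p : lp Fam ∞)) : lp Fam ∞) : ∀ j, Fam j) i₀) : ↥KY) : Y) = _
              rw [h2, hψsmul]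
              rfl }
        let γ : PO →L[ℝ] Y := L.mkContinuous M (fun p => by
          show ‖(ψ (((p : lp Fam ∞) : ∀ j, Fam j) i₀) : Y)‖ ≤ M * ‖p‖
          have h3 : ‖((ψ (((p : lp Fam ∞) : ∀ j, Fam j) i₀) : ↥KY) : Y)‖
              = ‖ψ (((p : lp Fam ∞) : ∀ j, Fam j) i₀)‖ := rfl
          rw [h3, hψnorm]
          exact mul_le_mul_of_nonneg_left
            (lp.norm_apply_le_norm ENNReal.top_ne_zero (p : lp Fam ∞) i₀) hM0)
        refine ⟨γ, ?_, ?_, ?_, LinearMap.mkContinuous_norm_le _ hM0 _⟩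
        · -- γ lattice hom
          intro p q
          show ((ψ (((((p ⊔ q : PO) : lp Fam ∞)) : ∀ j, Fam j) i₀) : ↥KY) : Y) = _
          have h1 : ((((p ⊔ q : PO) : lp Fam ∞)) : ∀ j, Fam j) i₀
              = (((p : lp Fam ∞) : ∀ j, Fam j) i₀) ⊔ (((q : lp Fam ∞) : ∀ j, Fam j) i₀) := rfl
          rw [h1, hψsup]
          rfl
        · -- γ ∘ S₁ = R₁
          refine ContinuousLinearMap.ext fun x => ?_
          show ((ψ ((((S₁ x : PO) : lp Fam ∞) : ∀ j, Fam j) i₀) : ↥KY) : Y) = R₁ x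
          have h1 : (((S₁ x : PO) : lp Fam ∞) : ∀ j, Fam j) i₀ = i₀.r₁ x := rfl
          rw [h1, hψ₁]
          rfl
        · -- γ ∘ S₂ = R₂
          refine ContinuousLinearMap.ext fun x => ?_
          show ((ψ ((((S₂ x : PO) : lp Fam ∞) : ∀ j, Fam j) i₀) : ↥KY) : Y) = R₂ x
          have h1 : (((S₂ x : PO) : lp Fam ∞) : ∀ j, Fam j) i₀ = i₀.r₂ x := rfl
          rw [h1, hψ₂]
          rfl
    · -- uniqueness of γ
      intro γ γ' hγ h1 h2 hγ' h1' h2'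
      have key : ∀ t : PushTerm X₁ X₂, γ (pt t) = γ' (pt t) := by
        intro t
        induction t with
        | of z =>
          cases z with
          | inl x =>
            rw [hpt_of₁]
            rw [show γ (S₁ x) = R₁ x from ContinuousLinearMap.ext_iff.mp h1 x,
              show γ' (S₁ x) = R₁ x from ContinuousLinearMap.ext_iff.mp h1' x]
          | inr x =>
            rw [hpt_of₂]
            rw [show γ (S₂ x) = R₂ x from ContinuousLinearMap.ext_iff.mp h2 x,
              show γ' (S₂ x) = R₂ x from ContinuousLinearMap.ext_iff.mp h2' x]
        | add s t ihs iht =>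
          rw [hpt_add, map_add, map_add, ihs, iht]
        | smul r t ih =>
          rw [hpt_smul, map_smul, map_smul, ih]
        | sup s t ihs iht =>
          rw [hpt_sup, hγ, hγ', ihs, iht]
      refine ContinuousLinearMap.ext fun p => ?_
      have hp : ((p : lp Fam ∞) : lp Fam ∞) ∈ closure ((PushTerm.genSub Smap : Submodule ℝ (lp Fam ∞)) : Set (lp Fam ∞)) := by
        have h := p.2
        rw [← Submodule.topologicalClosure_coe]
        exact h
      rw [mem_closure_iff_seq_limit] at hp
      obtain ⟨v, hv, hlim⟩ := hp
      choose t ht using hv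
      have hseq : Filter.Tendsto (fun n => pt (t n)) Filter.atTop (nhds p) := by
        rw [tendsto_subtype_rng]
        convert hlim using 1
        exact funext ht
      have c1 : Filter.Tendsto (fun n => γ (pt (t n))) Filter.atTop (nhds (γ p)) :=
        (γ.continuous.tendsto p).comp hseq
      have c2 : Filter.Tendsto (fun n => γ' (pt (t n))) Filter.atTop (nhds (γ' p)) :=
        (γ'.continuous.tendsto p).comp hseq
      have c1' : Filter.Tendsto (fun n => γ' (pt (t n))) Filter.atTop (nhds (γ p)) := by
        simpa only [key] using c1
      exact tendsto_nhds_unique c1' c2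

end Main
end

section
/- Let (x_n) be an increasing sequence in a Banach lattice X with upper bound x_∞ ∈ X. Then x_∞ is the supremum of {x_n} in every Banach lattice Y containing X as a sublattice if and only if x_n converges to x_∞ in the weak topology of X. -/
open Filter


section PosSMul
variable {X : Type} [NormedAddCommGroup X] [Lattice X] [IsOrderedAddMonoid X] [HasSolidNorm X] [NormedSpace ℝ X]

lemma half_smul_nonneg {a : X} (ha : 0 ≤ a) : 0 ≤ (2⁻¹ : ℝ) • a := by
  apply nsmul_two_semiclosed
  have : (2 : ℕ) • ((2⁻¹ : ℝ) • a) = a := by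
    rw [← Nat.cast_smul_eq_nsmul ℝ, smul_smul]; norm_num
  rwa [this]

lemma dyadic_smul_nonneg (m k : ℕ) {a : X} (ha : 0 ≤ a) :
    0 ≤ ((m : ℝ) / 2 ^ k) • a := by
  have h1 : ∀ k : ℕ, 0 ≤ ((2 : ℝ)⁻¹ ^ k) • a := by
    intro k; induction k with
    | zero => simpa using ha
    | succ k ih => rw [pow_succ, mul_comm, mul_smul]; exact half_smul_nonneg ih
  have : ((m : ℝ) / 2 ^ k) • a = m • (((2 : ℝ)⁻¹ ^ k) • a) := by
    rw [← Nat.cast_smul_eq_nsmul ℝ, smul_smul]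
    congr 1
    rw [div_eq_mul_inv, inv_pow]
  rw [this]
  exact nsmul_nonneg (h1 k) m

lemma real_smul_nonneg {c : ℝ} (hc : 0 ≤ c) {a : X} (ha : 0 ≤ a) : 0 ≤ c • a := by
  -- approximate c by dyadics
  have hmem : ∀ k : ℕ, ((⌊c * 2 ^ k⌋₊ : ℝ) / 2 ^ k) • a ∈ {y : X | 0 ≤ y} :=
    fun k => dyadic_smul_nonneg _ _ ha
  have htend : Tendsto (fun k : ℕ => ((⌊c * 2 ^ k⌋₊ : ℝ) / 2 ^ k)) atTop (nhds c) := by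
    have h1 : ∀ k : ℕ, c - (2 : ℝ)⁻¹ ^ k ≤ (⌊c * 2 ^ k⌋₊ : ℝ) / 2 ^ k := by
      intro k
      rw [sub_le_iff_le_add, div_add' _ _ _ (by positivity), le_div_iff₀ (by positivity)]
      have h := (Nat.lt_floor_add_one (c * 2 ^ k)).le
      have h2 : (2:ℝ)⁻¹ ^ k * 2 ^ k = 1 := by
        rw [← mul_pow]; norm_num
      nlinarith [h]
    have h2 : ∀ k : ℕ, (⌊c * 2 ^ k⌋₊ : ℝ) / 2 ^ k ≤ c := by
      intro k
      rw [div_le_iff₀ (by positivity)]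
      exact Nat.floor_le (by positivity)
    have hl : Tendsto (fun k : ℕ => c - (2 : ℝ)⁻¹ ^ k) atTop (nhds c) := by
      have := tendsto_pow_atTop_nhds_zero_of_lt_one (by norm_num : (0:ℝ) ≤ 2⁻¹) (by norm_num)
      simpa using tendsto_const_nhds.sub this
    exact tendsto_of_tendsto_of_tendsto_of_le_of_le hl tendsto_const_nhds h1 h2
  have : Tendsto (fun k : ℕ => ((⌊c * 2 ^ k⌋₊ : ℝ) / 2 ^ k) • a) atTop (nhds (c • a)) :=
    htend.smul_const a
  exact isClosed_nonneg.mem_of_tendsto this (Eventually.of_forall hmem)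

lemma real_smul_le_smul {c : ℝ} (hc : 0 ≤ c) {a b : X} (hab : a ≤ b) : c • a ≤ c • b := by
  have := real_smul_nonneg hc (sub_nonneg.2 hab)
  rwa [smul_sub, sub_nonneg] at this

end PosSMul

open BoundedContinuousFunction Submodule

section AbsLemmas
variable {α : Type} [Lattice α] [AddCommGroup α] [AddLeftMono α] [AddRightMono α]

lemma abs_add_lat (a b : α) : |a + b| ≤ |a| + |b| :=
  abs_le'.2 ⟨add_le_add (le_abs_self _) (le_abs_self _),
    by rw [neg_add]; exact add_le_add (neg_le_abs _) (neg_le_abs _)⟩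

lemma abs_sup_sup (a b c d : α) : |a ⊔ b - c ⊔ d| ≤ |a - c| + |b - d| := by
  have h1 : |a ⊔ b - c ⊔ b| ≤ |a - c| := abs_sup_sub_sup_le_abs a c b
  have h2 : |c ⊔ b - c ⊔ d| ≤ |b - d| := by
    rw [sup_comm c b, sup_comm c d]; exact abs_sup_sub_sup_le_abs b d c
  calc |a ⊔ b - c ⊔ d| = |(a ⊔ b - c ⊔ b) + (c ⊔ b - c ⊔ d)| := by abel_nf
    _ ≤ |a ⊔ b - c ⊔ b| + |c ⊔ b - c ⊔ d| := abs_add_lat _ _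
    _ ≤ |a - c| + |b - d| := add_le_add h1 h2

lemma abs_inf_inf (a b c d : α) : |a ⊓ b - c ⊓ d| ≤ |a - c| + |b - d| := by
  have h1 : |a ⊓ b - c ⊓ b| ≤ |a - c| := abs_inf_sub_inf_le_abs a c b
  have h2 : |c ⊓ b - c ⊓ d| ≤ |b - d| := by
    rw [inf_comm c b, inf_comm c d]; exact abs_inf_sub_inf_le_abs b d c
  calc |a ⊓ b - c ⊓ d| = |(a ⊓ b - c ⊓ b) + (c ⊓ b - c ⊓ d)| := by abel_nf
    _ ≤ |a ⊓ b - c ⊓ b| + |c ⊓ b - c ⊓ d| := abs_add_lat _ _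
    _ ≤ |a - c| + |b - d| := add_le_add h1 h2

end AbsLemmas

section CZ
variable (X : Type) [NormedAddCommGroup X] [Lattice X] [IsOrderedAddMonoid X] [HasSolidNorm X] [NormedSpace ℝ X]

noncomputable def cZ : Submodule ℝ (ℕ →ᵇ X) where
  carrier := {g | Tendsto (fun n => g n) atTop (nhds 0)}
  add_mem' := fun hf hg => by simpa using hf.add hg
  zero_mem' := by
    simpa using (tendsto_const_nhds : Tendsto (fun _ : ℕ => (0 : X)) atTop (nhds 0))
  smul_mem' := fun c g hg => by simpa using hg.const_smul c

variable {X}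

lemma mem_cZ {g : ℕ →ᵇ X} : g ∈ cZ X ↔ Tendsto (fun n => g n) atTop (nhds 0) := Iff.rfl

lemma cZ_norm {g : ℕ →ᵇ X} (hg : g ∈ cZ X) :
    Tendsto (fun n => ‖g n‖) atTop (nhds 0) :=
  tendsto_zero_iff_norm_tendsto_zero.1 hg

lemma cZ_of_norm {g : ℕ →ᵇ X} (hg : Tendsto (fun n => ‖g n‖) atTop (nhds 0)) : g ∈ cZ X :=
  tendsto_zero_iff_norm_tendsto_zero.2 hg

instance cZ_closed : IsClosed ((cZ X : Submodule ℝ (ℕ →ᵇ X)) : Set (ℕ →ᵇ X)) := by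
  refine isClosed_of_closure_subset fun g hg => ?_
  rw [SetLike.mem_coe, mem_cZ, NormedAddCommGroup.tendsto_nhds_zero]
  intro ε hε
  obtain ⟨h, hhI, hdist⟩ := Metric.mem_closure_iff.1 hg (ε / 2) (by positivity)
  have hh : Tendsto (fun n => ‖(h : ℕ →ᵇ X) n‖) atTop (nhds 0) := cZ_norm hhI
  have h2 := (Metric.tendsto_atTop.1 hh) (ε / 2) (by positivity)
  obtain ⟨N, hN⟩ := h2
  rw [eventually_atTop]
  refine ⟨N, fun n hn => ?_⟩
  have hb : ‖g n - h n‖ ≤ ‖g - h‖ := by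
    simpa using norm_coe_le_norm (g - h) n
  have hdn : ‖g - h‖ < ε / 2 := by rwa [dist_eq_norm] at hdist
  have hhn : ‖h n‖ < ε / 2 := by
    have := hN n hn
    rw [Real.dist_eq, sub_zero] at this
    exact (le_abs_self _).trans_lt this
  calc ‖g n‖ = ‖(g n - h n) + h n‖ := by congr 1; abel
    _ ≤ ‖g n - h n‖ + ‖h n‖ := norm_add_le _ _
    _ < ε / 2 + ε / 2 := add_lt_add_of_le_of_lt (hb.trans hdn.le) hhn
    _ = ε := by ring

lemma cZ_solid {w z : ℕ →ᵇ X} (h : |w| ≤ |z|) (hz : z ∈ cZ X) : w ∈ cZ X := by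
  refine cZ_of_norm (squeeze_zero (fun n => norm_nonneg _) (fun n => ?_) (cZ_norm hz))
  refine norm_le_norm_of_abs_le_abs ?_
  have h' : (|w| : ℕ → X) ≤ (|z| : ℕ → X) := h
  simpa using h' n

lemma cZ_abs_mem {z : ℕ →ᵇ X} (hz : z ∈ cZ X) : |z| ∈ cZ X :=
  cZ_solid (by rw [abs_abs]) hz

lemma sup_rel {a c b d : ℕ →ᵇ X} (h1 : a - c ∈ cZ X) (h2 : b - d ∈ cZ X) :
    a ⊔ b - (c ⊔ d) ∈ cZ X := by
  have hz : |a - c| + |b - d| ∈ cZ X := (cZ X).add_mem (cZ_abs_mem h1) (cZ_abs_mem h2)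
  refine cZ_solid ?_ hz
  rw [abs_of_nonneg (show (0 : ℕ →ᵇ X) ≤ |a - c| + |b - d| from
    add_nonneg (abs_nonneg _) (abs_nonneg _))]
  exact abs_sup_sup a b c d

lemma inf_rel {a c b d : ℕ →ᵇ X} (h1 : a - c ∈ cZ X) (h2 : b - d ∈ cZ X) :
    a ⊓ b - (c ⊓ d) ∈ cZ X := by
  have hz : |a - c| + |b - d| ∈ cZ X := (cZ X).add_mem (cZ_abs_mem h1) (cZ_abs_mem h2)
  refine cZ_solid ?_ hz
  rw [abs_of_nonneg (show (0 : ℕ →ᵇ X) ≤ |a - c| + |b - d| from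
    add_nonneg (abs_nonneg _) (abs_nonneg _))]
  exact abs_inf_inf a b c d

end CZ

section QuotLattice
variable {X : Type} [NormedAddCommGroup X] [Lattice X] [IsOrderedAddMonoid X] [HasSolidNorm X] [NormedSpace ℝ X]

local notation "QY" => ((ℕ →ᵇ X) ⧸ cZ X)

noncomputable instance QYmax : Max ((ℕ →ᵇ X) ⧸ cZ X) :=
  ⟨Quotient.map₂' (· ⊔ ·) (fun a c hac b d hbd => by
    rw [Submodule.quotientRel_def] at *
    exact sup_rel hac hbd)⟩

noncomputable instance QYmin : Min ((ℕ →ᵇ X) ⧸ cZ X) :=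
  ⟨Quotient.map₂' (· ⊓ ·) (fun a c hac b d hbd => by
    rw [Submodule.quotientRel_def] at *
    exact inf_rel hac hbd)⟩

lemma mk_sup (a b : ℕ →ᵇ X) :
    (Submodule.Quotient.mk a : QY) ⊔ Submodule.Quotient.mk b = Submodule.Quotient.mk (a ⊔ b) :=
  rfl

lemma mk_inf (a b : ℕ →ᵇ X) :
    (Submodule.Quotient.mk a : QY) ⊓ Submodule.Quotient.mk b = Submodule.Quotient.mk (a ⊓ b) :=
  rfl

noncomputable instance QYlattice : Lattice ((ℕ →ᵇ X) ⧸ cZ X) := by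
  refine Lattice.mk' ?_ ?_ ?_ ?_ ?_ ?_
  · intro a b
    obtain ⟨a, rfl⟩ := Submodule.Quotient.mk_surjective _ a
    obtain ⟨b, rfl⟩ := Submodule.Quotient.mk_surjective _ b
    rw [mk_sup, mk_sup, sup_comm]
  · intro a b c
    obtain ⟨a, rfl⟩ := Submodule.Quotient.mk_surjective _ a
    obtain ⟨b, rfl⟩ := Submodule.Quotient.mk_surjective _ b
    obtain ⟨c, rfl⟩ := Submodule.Quotient.mk_surjective _ c
    rw [mk_sup, mk_sup, mk_sup, mk_sup, sup_assoc]
  · intro a b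
    obtain ⟨a, rfl⟩ := Submodule.Quotient.mk_surjective _ a
    obtain ⟨b, rfl⟩ := Submodule.Quotient.mk_surjective _ b
    rw [mk_inf, mk_inf, inf_comm]
  · intro a b c
    obtain ⟨a, rfl⟩ := Submodule.Quotient.mk_surjective _ a
    obtain ⟨b, rfl⟩ := Submodule.Quotient.mk_surjective _ b
    obtain ⟨c, rfl⟩ := Submodule.Quotient.mk_surjective _ c
    rw [mk_inf, mk_inf, mk_inf, mk_inf, inf_assoc]
  · intro a b
    obtain ⟨a, rfl⟩ := Submodule.Quotient.mk_surjective _ a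
    obtain ⟨b, rfl⟩ := Submodule.Quotient.mk_surjective _ b
    rw [mk_inf, mk_sup, sup_inf_self]
  · intro a b
    obtain ⟨a, rfl⟩ := Submodule.Quotient.mk_surjective _ a
    obtain ⟨b, rfl⟩ := Submodule.Quotient.mk_surjective _ b
    rw [mk_sup, mk_inf, inf_sup_self]

lemma qy_mk_le_mk {u v : ℕ →ᵇ X} :
    (Submodule.Quotient.mk u : QY) ≤ Submodule.Quotient.mk v ↔ u ⊔ v - v ∈ cZ X := by
  rw [← sup_eq_right, mk_sup, Submodule.Quotient.eq]

end QuotLattice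

section QuotNormed
variable {X : Type} [NormedAddCommGroup X] [Lattice X] [IsOrderedAddMonoid X] [HasSolidNorm X] [NormedSpace ℝ X]

lemma mk_abs (u : ℕ →ᵇ X) :
    |(Submodule.Quotient.mk u : (ℕ →ᵇ X) ⧸ cZ X)| = Submodule.Quotient.mk |u| := by
  show Submodule.Quotient.mk u ⊔ -Submodule.Quotient.mk u = _
  rw [← Submodule.Quotient.mk_neg, mk_sup]
  rfl

lemma posPart_sub_eq (u v : ℕ →ᵇ X) : u ⊔ v - v = (u - v)⁺ := by
  rw [sup_sub, sub_self, posPart_def]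

noncomputable instance QYordered : IsOrderedAddMonoid ((ℕ →ᵇ X) ⧸ cZ X) :=
  { add_le_add_left := by
      intro a b hab c
      rw [add_comm a c, add_comm b c]
      obtain ⟨a, rfl⟩ := Submodule.Quotient.mk_surjective _ a
      obtain ⟨b, rfl⟩ := Submodule.Quotient.mk_surjective _ b
      obtain ⟨c, rfl⟩ := Submodule.Quotient.mk_surjective _ c
      rw [qy_mk_le_mk] at hab
      rw [← Submodule.Quotient.mk_add, ← Submodule.Quotient.mk_add, qy_mk_le_mk]
      have e : (c + a) ⊔ (c + b) - (c + b) = a ⊔ b - b := by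
        rw [← add_sup a b c]; abel
      rwa [e] }

instance QYsolid : HasSolidNorm ((ℕ →ᵇ X) ⧸ cZ X) :=
  { solid := by
      intro ξ η h
      obtain ⟨u, rfl⟩ := Submodule.Quotient.mk_surjective _ ξ
      obtain ⟨v, rfl⟩ := Submodule.Quotient.mk_surjective _ η
      refine le_of_forall_pos_le_add fun ε hε => ?_
      obtain ⟨w, hwv, hwn⟩ := Submodule.Quotient.norm_mk_lt (Submodule.Quotient.mk v : (ℕ →ᵇ X) ⧸ cZ X) hε
      have h' : (Submodule.Quotient.mk |u| : (ℕ →ᵇ X) ⧸ cZ X) ≤ Submodule.Quotient.mk |w| := by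
        rw [← mk_abs, ← mk_abs, hwv]
        exact h
      rw [qy_mk_le_mk, posPart_sub_eq] at h'
      set c := |w| with hc
      have hc0 : 0 ≤ c := abs_nonneg _
      set u' := (u ⊓ c) ⊔ (-c) with hu'
      have habs_u' : |u'| ≤ c := by
        refine abs_le'.2 ⟨sup_le inf_le_right ((neg_nonpos.2 hc0).trans hc0), ?_⟩
        exact neg_le.2 le_sup_right
      have e1 : u - u' = (u - c)⁺ ⊓ (u - (-c)) := by
        rw [hu', sub_sup, sub_inf, sub_self, posPart_def, sup_comm]
      have key : |u - u'| ≤ (|u| - c)⁺ := by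
        have hup : u - u' ≤ (|u| - c)⁺ := by
          rw [e1]
          exact inf_le_left.trans (posPart_mono (sub_le_sub_right (le_abs_self u) c))
        have hlow : -((|u| - c)⁺) ≤ u - u' := by
          rw [e1]
          refine le_inf ((neg_nonpos.2 (posPart_nonneg _)).trans (posPart_nonneg _)) ?_
          have h3 : -(u - (-c)) ≤ (|u| - c)⁺ := by
            have : -(u - (-c)) = -u - c := by abel
            rw [this]
            exact (sub_le_sub_right (neg_le_abs u) c).trans (le_posPart _)
          exact neg_le.1 h3
        exact abs_le'.2 ⟨hup, neg_le.2 hlow⟩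
      have hmem : u - u' ∈ cZ X := by
        refine cZ_solid ?_ h'
        rw [abs_of_nonneg (posPart_nonneg _)]
        exact key
      have hmk : (Submodule.Quotient.mk u : (ℕ →ᵇ X) ⧸ cZ X) = Submodule.Quotient.mk u' :=
        (Submodule.Quotient.eq (cZ X)).2 hmem
      calc ‖(Submodule.Quotient.mk u : (ℕ →ᵇ X) ⧸ cZ X)‖
          = ‖(Submodule.Quotient.mk u' : (ℕ →ᵇ X) ⧸ cZ X)‖ := by rw [hmk]
        _ ≤ ‖u'‖ := Submodule.Quotient.norm_mk_le _ _
        _ ≤ ‖w‖ := norm_le_norm_of_abs_le_abs habs_u'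
        _ ≤ ‖Submodule.Quotient.mk v‖ + ε := hwn.le }

end QuotNormed

section Embed
variable {X : Type} [NormedAddCommGroup X] [Lattice X] [IsOrderedAddMonoid X] [HasSolidNorm X] [NormedSpace ℝ X]

noncomputable def jmap : X →ₗᵢ[ℝ] (ℕ →ᵇ X) ⧸ cZ X where
  toFun a := Submodule.Quotient.mk (BoundedContinuousFunction.const ℕ a)
  map_add' a b := by
    rw [← Submodule.Quotient.mk_add]
    congr 1
  map_smul' c a := by
    rw [RingHom.id_apply, ← Submodule.Quotient.mk_smul]
    congr 1
  norm_map' a := by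
    refine le_antisymm ((Submodule.Quotient.norm_mk_le _ _).trans (norm_const_le a)) ?_
    refine le_of_forall_pos_le_add fun ε hε => ?_
    obtain ⟨m, hm, hmn⟩ := Submodule.Quotient.norm_mk_lt
      (Submodule.Quotient.mk (const ℕ a) : (ℕ →ᵇ X) ⧸ cZ X) hε
    have hz : const ℕ a - m ∈ cZ X := by
      rw [← Submodule.Quotient.eq (cZ X)]
      exact hm.symm
    have hzt : Tendsto (fun n => ‖(const ℕ a - m) n‖) atTop (nhds 0) := cZ_norm hz
    refine le_of_forall_pos_le_add fun δ hδ => ?_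
    obtain ⟨N, hN⟩ := (Metric.tendsto_atTop.1 hzt) δ hδ
    have h1 : ‖a‖ ≤ ‖m N‖ + ‖(const ℕ a - m) N‖ := by
      have : a = m N + (const ℕ a - m) N := by simp
      calc ‖a‖ = ‖m N + (const ℕ a - m) N‖ := by rw [← this]
        _ ≤ _ := norm_add_le _ _
    have h2 : ‖(const ℕ a - m) N‖ < δ := by
      have := hN N le_rfl
      rwa [Real.dist_eq, sub_zero, abs_of_nonneg (norm_nonneg _)] at this
    calc ‖a‖ ≤ ‖m N‖ + ‖(const ℕ a - m) N‖ := h1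
      _ ≤ ‖m‖ + ‖(const ℕ a - m) N‖ := add_le_add_left (norm_coe_le_norm _ _) _
      _ ≤ (‖(Submodule.Quotient.mk (const ℕ a) : (ℕ →ᵇ X) ⧸ cZ X)‖ + ε) + δ :=
        add_le_add hmn.le h2.le

lemma jmap_sup (a b : X) : jmap (X := X) (a ⊔ b) = jmap (X := X) a ⊔ jmap (X := X) b := by
  show Submodule.Quotient.mk (const ℕ (a ⊔ b)) = _
  rw [show (jmap (X := X) a ⊔ jmap (X := X) b) =
    (Submodule.Quotient.mk (const ℕ a ⊔ const ℕ b) : (ℕ →ᵇ X) ⧸ cZ X) from (mk_sup _ _)]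
  congr 1

lemma lub_to_norm (x : ℕ → X) (hmono : Monotone x) (xinf : X) (hub : ∀ n, x n ≤ xinf)
    (H : IsLUB (Set.range fun n => jmap (X := X) (x n)) (jmap (X := X) xinf)) :
    Tendsto x atTop (nhds xinf) := by
  have hbound : ∀ n, ‖x n‖ ≤ ‖|x 0| ⊔ |xinf|‖ := by
    intro n
    refine norm_le_norm_of_abs_le_abs (le_trans ?_ (le_abs_self _))
    refine abs_le'.2 ⟨(hub n).trans ((le_abs_self _).trans le_sup_right), ?_⟩
    exact (neg_le_neg (hmono (Nat.zero_le n))).trans ((neg_le_abs _).trans le_sup_left)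
  set g : ℕ →ᵇ X := BoundedContinuousFunction.ofNormedAddCommGroup x
    continuous_of_discreteTopology _ hbound with hg
  have hgapp : ∀ n, g n = x n := fun n => rfl
  have hup : ∀ m, jmap (X := X) (x m) ≤ (Submodule.Quotient.mk g : (ℕ →ᵇ X) ⧸ cZ X) := by
    intro m
    show (Submodule.Quotient.mk (const ℕ (x m)) : (ℕ →ᵇ X) ⧸ cZ X) ≤ _
    rw [qy_mk_le_mk, mem_cZ]
    have hev : (fun n => (const ℕ (x m) ⊔ g - g) n) =ᶠ[atTop] fun _ => (0 : X) := by
      filter_upwards [eventually_ge_atTop m] with n hn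
      have : (const ℕ (x m) ⊔ g - g) n = x m ⊔ x n - x n := by
        simp [hgapp]
      rw [this, sup_eq_right.2 (hmono hn), sub_self]
    exact (tendsto_congr' hev).2 tendsto_const_nhds
  have hle : jmap (X := X) xinf ≤ (Submodule.Quotient.mk g : (ℕ →ᵇ X) ⧸ cZ X) := by
    refine H.2 ?_
    rintro _ ⟨m, rfl⟩
    exact hup m
  have hmem : const ℕ xinf ⊔ g - g ∈ cZ X := by
    rw [← qy_mk_le_mk]
    exact hle
  have htend : Tendsto (fun n => xinf - x n) atTop (nhds 0) := by
    have := (mem_cZ).1 hmem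
    refine this.congr fun n => ?_
    simp [hgapp, sup_eq_left.2 (hub n)]
  have : Tendsto (fun n => x n - xinf) atTop (nhds 0) := by
    have := htend.neg
    rw [neg_zero] at this
    refine this.congr fun n => by abel
  exact tendsto_sub_nhds_zero_iff.1 this

end Embed


section WeakNorm
variable {X : Type} [NormedAddCommGroup X] [Lattice X] [IsOrderedAddMonoid X] [HasSolidNorm X] [NormedSpace ℝ X]


lemma mem_hull_le (x : ℕ → X) (hmono : Monotone x) {y : X}
    (hy : y ∈ convexHull ℝ (Set.range x)) : ∃ N, y ≤ x N := by
  have hconv : Convex ℝ {y : X | ∃ N, y ≤ x N} := by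
    rintro y ⟨N, hN⟩ z ⟨M, hM⟩ a b ha hb hab
    refine ⟨max N M, ?_⟩
    calc a • y + b • z ≤ a • x (max N M) + b • x (max N M) :=
          add_le_add (real_smul_le_smul ha (hN.trans (hmono (le_max_left N M))))
            (real_smul_le_smul hb (hM.trans (hmono (le_max_right N M))))
      _ = x (max N M) := by rw [← add_smul, hab, one_smul]
  exact convexHull_min (Set.range_subset_iff.2 (fun n => Set.mem_setOf.2 ⟨n, le_rfl⟩)) hconv hy

lemma weak_to_norm (x : ℕ → X) (hmono : Monotone x) (xinf : X) (hub : ∀ n, x n ≤ xinf)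
    (hw : ∀ f : X →L[ℝ] ℝ, Tendsto (fun n => f (x n)) atTop (nhds (f xinf))) :
    Tendsto x atTop (nhds xinf) := by
  set s := convexHull ℝ (Set.range x) with hs
  have hsc : Convex ℝ s := convex_convexHull ℝ _
  -- weak tendsto
  have hwt : Tendsto (fun n => toWeakSpace ℝ X (x n)) atTop (nhds (toWeakSpace ℝ X xinf)) := by
    erw [nhds_induced, tendsto_comap_iff]
    rw [tendsto_pi_nhds]
    intro f
    exact hw f
  -- xinf in weak closure of image of s
  have hmem : toWeakSpace ℝ X xinf ∈ closure (toWeakSpace ℝ X '' s) := by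
    apply mem_closure_of_tendsto hwt
    exact Eventually.of_forall fun n => Set.mem_image_of_mem _ (subset_convexHull ℝ _ ⟨n, rfl⟩)
  have hmem2 : xinf ∈ closure s := by
    rw [← hsc.toWeakSpace_closure ℝ] at hmem
    obtain ⟨y, hy, hyx⟩ := hmem
    rwa [← (toWeakSpace ℝ X).injective hyx]
  -- conclude
  rw [Metric.tendsto_atTop]
  intro ε hε
  obtain ⟨y, hy, hd⟩ := Metric.mem_closure_iff.1 hmem2 ε hε
  obtain ⟨N, hN⟩ := mem_hull_le x hmono hy
  refine ⟨N, fun n hn => ?_⟩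
  have h1 : 0 ≤ xinf - x n := sub_nonneg.2 (hub n)
  have h2 : xinf - x n ≤ xinf - y := sub_le_sub_left (hN.trans (hmono hn)) _
  have h3 : |xinf - x n| ≤ |xinf - y| := by
    rw [abs_of_nonneg h1]; exact h2.trans (le_abs_self _)
  have := norm_le_norm_of_abs_le_abs h3
  rw [dist_eq_norm, ← norm_neg, neg_sub]
  calc ‖xinf - x n‖ ≤ ‖xinf - y‖ := this
    _ < ε := by rwa [dist_eq_norm] at hd

end WeakNorm


section NormLub
variable {X : Type} [NormedAddCommGroup X] [Lattice X] [IsOrderedAddMonoid X] [HasSolidNorm X] [NormedSpace ℝ X]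

lemma norm_to_lub {Y : Type} [NormedAddCommGroup Y] [Lattice Y] [IsOrderedAddMonoid Y] [HasSolidNorm Y] [NormedSpace ℝ Y]
    (x : ℕ → X) (xinf : X) (hub : ∀ n, x n ≤ xinf)
    (hn : Tendsto x atTop (nhds xinf))
    (j : X →ₗᵢ[ℝ] Y) (hj : ∀ a b : X, j (a ⊔ b) = j a ⊔ j b) :
    IsLUB (Set.range fun n => j (x n)) (j xinf) := by
  have jmono : ∀ {a b : X}, a ≤ b → j a ≤ j b := by
    intro a b hab
    have := hj a b
    rw [sup_eq_right.2 hab] at this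
    rw [this]
    exact le_sup_left
  constructor
  · rintro _ ⟨n, rfl⟩
    exact jmono (hub n)
  · intro u hu
    have key : ∀ n, ‖(j xinf - u)⁺‖ ≤ ‖xinf - x n‖ := by
      intro n
      have h1 : j xinf - u ≤ j xinf - j (x n) :=
        sub_le_sub_left (hu ⟨n, rfl⟩) _
      have h2 : (j xinf - u)⁺ ≤ (j xinf - j (x n))⁺ := sup_le_sup_right h1 _
      have h3 : j xinf - j (x n) = j (xinf - x n) := (j.map_sub _ _).symm
      have h4 : (0 : Y) ≤ j (xinf - x n) := by
        have := jmono (sub_nonneg.2 (hub n))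
        rwa [j.map_zero] at this
      have h5 : (j xinf - j (x n))⁺ = j (xinf - x n) := by
        rw [h3]; exact posPart_eq_self.2 h4
      have h6 : |(j xinf - u)⁺| ≤ |j (xinf - x n)| := by
        rw [abs_of_nonneg (posPart_nonneg _), abs_of_nonneg h4, ← h5]
        exact h2
      have := norm_le_norm_of_abs_le_abs h6
      rwa [j.norm_map] at this
    have hzero : ‖(j xinf - u)⁺‖ = 0 := by
      have htend : Tendsto (fun n => ‖xinf - x n‖) atTop (nhds 0) := by
        have : Tendsto (fun n => xinf - x n) atTop (nhds (xinf - xinf)) :=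
          tendsto_const_nhds.sub hn
        rw [sub_self] at this
        simpa using this.norm
      exact le_antisymm (le_of_tendsto_of_tendsto' tendsto_const_nhds htend key)
        (norm_nonneg _)
    have : (j xinf - u)⁺ = 0 := norm_eq_zero.1 hzero
    have := posPart_eq_zero.1 this
    exact sub_nonpos.1 this

end NormLub

open BoundedContinuousFunction in
/-- Let `(x n)` be an increasing sequence in a Banach lattice `X` with an upper
bound `xinf ∈ X`.  Then `xinf` is the supremum of `{x n}` in every Banach lattice
`Y` containing `X` as a (closed) sublattice — i.e. under every lattice
isometric embedding `j : X → Y` the element `j xinf` is the least upper bound of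
the `j (x n)` — if and only if `x n → xinf` in the weak topology of `X`. -/
theorem sup_in_every_superlattice_iff_weak_limit {X : Type}
    [NormedAddCommGroup X] [Lattice X] [IsOrderedAddMonoid X] [HasSolidNorm X] [NormedSpace ℝ X] [CompleteSpace X]
    (x : ℕ → X) (hmono : Monotone x) (xinf : X) (hub : ∀ n, x n ≤ xinf) :
    (∀ (Y : Type) (_ : NormedAddCommGroup Y) (_ : Lattice Y)
        (_ : IsOrderedAddMonoid Y) (_ : HasSolidNorm Y) (_ : NormedSpace ℝ Y)
        (_ : CompleteSpace Y) (j : X →ₗᵢ[ℝ] Y),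
        (∀ a b : X, j (a ⊔ b) = j a ⊔ j b) →
        IsLUB (Set.range fun n => j (x n)) (j xinf)) ↔
      ∀ f : X →L[ℝ] ℝ, Tendsto (fun n => f (x n)) atTop (nhds (f xinf)) := by
  constructor
  · intro H f
    have hn : Tendsto x atTop (nhds xinf) :=
      lub_to_norm x hmono xinf hub
        (H ((ℕ →ᵇ X) ⧸ cZ X) inferInstance inferInstance inferInstance inferInstance inferInstance inferInstance jmap jmap_sup)
    exact (f.continuous.tendsto xinf).comp hn
  · intro hw Y iY iL iO iS iNS iC j hj
    exact norm_to_lub x xinf hub (weak_to_norm x hmono xinf hub hw) j hj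
end

section
/- Every separably 𝓑𝓛-injective Banach lattice Z has the countable interpolation property: for any sequences (x_n), (y_m) in Z with x_n ≤ y_m for all n, m, there exists z ∈ Z with x_n ≤ z ≤ y_m for all n, m. -/
open Filter Topology BoundedContinuousFunction Set

noncomputable section AuxiliaryConstruction

variable (Z : Type) [NormedAddCommGroup Z] [Lattice Z] [IsOrderedAddMonoid Z] [HasSolidNorm Z] [NormedSpace ℝ Z] [CompleteSpace Z]

/-- The subspace of null sequences inside `ℕ →ᵇ Z`. -/
def czero : Submodule ℝ (ℕ →ᵇ Z) where
  carrier := {f | Tendsto ⇑f atTop (𝓝 0)}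
  zero_mem' := by
    show Tendsto ⇑(0 : ℕ →ᵇ Z) atTop (𝓝 0)
    rw [BoundedContinuousFunction.coe_zero]
    exact tendsto_const_nhds
  add_mem' := by
    intro f g hf hg
    have := (hf : Tendsto ⇑f atTop (𝓝 0)).add (hg : Tendsto ⇑g atTop (𝓝 0))
    rw [add_zero] at this
    exact this
  smul_mem' := by
    intro c f hf
    have := (hf : Tendsto ⇑f atTop (𝓝 0)).const_smul c
    simpa using this

variable {Z}

lemma mem_czero {f : ℕ →ᵇ Z} : f ∈ czero Z ↔ Tendsto ⇑f atTop (𝓝 0) := Iff.rfl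

variable (Z)

lemma czero_isClosed : IsClosed ((czero Z : Set (ℕ →ᵇ Z))) := by
  refine isClosed_of_closure_subset fun f hf => ?_
  rw [SetLike.mem_coe, mem_czero, NormedAddCommGroup.tendsto_nhds_zero]
  intro ε hε
  obtain ⟨g, hgS, hgd⟩ := Metric.mem_closure_iff.mp hf (ε / 2) (by positivity)
  have hg : Tendsto ⇑g atTop (𝓝 0) := hgS
  have h2 := (NormedAddCommGroup.tendsto_nhds_zero.mp hg) (ε / 2) (by positivity)
  filter_upwards [h2] with k hk
  have h3 : ‖f k - g k‖ ≤ dist f g := by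
    rw [← dist_eq_norm]
    exact dist_coe_le_dist k
  calc ‖f k‖ ≤ ‖f k - g k‖ + ‖g k‖ := by
        simpa using norm_add_le (f k - g k) (g k)
    _ < ε / 2 + ε / 2 := add_lt_add (h3.trans_lt hgd) hk
    _ = ε := by ring

/-- The quotient `ℓ∞(ℕ,Z)/c₀(ℕ,Z)`. -/
abbrev QZ := (ℕ →ᵇ Z) ⧸ czero Z

variable {Z}

local notation "π" => (Submodule.Quotient.mk : (ℕ →ᵇ Z) → QZ Z)

lemma czero_sup_compat {f f' g g' : ℕ →ᵇ Z} (hf : f - f' ∈ czero Z)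
    (hg : g - g' ∈ czero Z) : (f ⊔ g) - (f' ⊔ g') ∈ czero Z := by
  rw [mem_czero] at hf hg ⊢
  have hb : Tendsto (fun k => ‖(f - f') k‖ + ‖(g - g') k‖) atTop (𝓝 0) := by
    simpa using hf.norm.add hg.norm
  refine squeeze_zero_norm (fun k => ?_) hb
  simp only [coe_sub, coe_sup, Pi.sub_apply, Pi.sup_apply]
  exact norm_sup_sub_sup_le_add_norm _ _ _ _

lemma czero_inf_compat {f f' g g' : ℕ →ᵇ Z} (hf : f - f' ∈ czero Z)
    (hg : g - g' ∈ czero Z) : (f ⊓ g) - (f' ⊓ g') ∈ czero Z := by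
  rw [mem_czero] at hf hg ⊢
  have hb : Tendsto (fun k => ‖(f - f') k‖ + ‖(g - g') k‖) atTop (𝓝 0) := by
    simpa using hf.norm.add hg.norm
  refine squeeze_zero_norm (fun k => ?_) hb
  simp only [coe_sub, coe_inf, Pi.sub_apply, Pi.inf_apply]
  exact norm_inf_sub_inf_le_add_norm _ _ _ _

private lemma rel_mem {f g : ℕ →ᵇ Z} (h : (Submodule.quotientRel (czero Z)) f g) :
    f - g ∈ czero Z :=
  (Submodule.Quotient.eq _).mp (Quotient.sound h)

noncomputable instance : Max (QZ Z) :=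
  ⟨fun a b => Quotient.liftOn₂ a b (fun f g => π (f ⊔ g)) (by
    intro f g f' g' hf hg
    exact (Submodule.Quotient.eq _).mpr (czero_sup_compat (rel_mem hf) (rel_mem hg)))⟩

noncomputable instance : Min (QZ Z) :=
  ⟨fun a b => Quotient.liftOn₂ a b (fun f g => π (f ⊓ g)) (by
    intro f g f' g' hf hg
    exact (Submodule.Quotient.eq _).mpr (czero_inf_compat (rel_mem hf) (rel_mem hg)))⟩

lemma qmk_sup (f g : ℕ →ᵇ Z) : (π f) ⊔ (π g) = π (f ⊔ g) := rfl

lemma qmk_inf (f g : ℕ →ᵇ Z) : (π f) ⊓ (π g) = π (f ⊓ g) := rfl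

noncomputable instance : Lattice (QZ Z) :=
  Lattice.mk'
    (by intro a b
        obtain ⟨f, rfl⟩ := Submodule.Quotient.mk_surjective _ a
        obtain ⟨g, rfl⟩ := Submodule.Quotient.mk_surjective _ b
        rw [qmk_sup, qmk_sup, sup_comm])
    (by intro a b c
        obtain ⟨f, rfl⟩ := Submodule.Quotient.mk_surjective _ a
        obtain ⟨g, rfl⟩ := Submodule.Quotient.mk_surjective _ b
        obtain ⟨h, rfl⟩ := Submodule.Quotient.mk_surjective _ c
        rw [qmk_sup, qmk_sup, qmk_sup, qmk_sup, sup_assoc])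
    (by intro a b
        obtain ⟨f, rfl⟩ := Submodule.Quotient.mk_surjective _ a
        obtain ⟨g, rfl⟩ := Submodule.Quotient.mk_surjective _ b
        rw [qmk_inf, qmk_inf, inf_comm])
    (by intro a b c
        obtain ⟨f, rfl⟩ := Submodule.Quotient.mk_surjective _ a
        obtain ⟨g, rfl⟩ := Submodule.Quotient.mk_surjective _ b
        obtain ⟨h, rfl⟩ := Submodule.Quotient.mk_surjective _ c
        rw [qmk_inf, qmk_inf, qmk_inf, qmk_inf, inf_assoc])
    (by intro a b
        obtain ⟨f, rfl⟩ := Submodule.Quotient.mk_surjective _ a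
        obtain ⟨g, rfl⟩ := Submodule.Quotient.mk_surjective _ b
        rw [qmk_inf, qmk_sup, sup_inf_self])
    (by intro a b
        obtain ⟨f, rfl⟩ := Submodule.Quotient.mk_surjective _ a
        obtain ⟨g, rfl⟩ := Submodule.Quotient.mk_surjective _ b
        rw [qmk_sup, qmk_inf, inf_sup_self])

lemma qmk_neg (f : ℕ →ᵇ Z) : π (-f) = -(π f) := by
  simpa using map_neg ((czero Z).mkQ) f

lemma qmk_abs (f : ℕ →ᵇ Z) : π |f| = |π f| := by
  show π (f ⊔ -f) = (π f) ⊔ -(π f)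
  rw [← qmk_neg, qmk_sup]

lemma qadd_sup (a b c : QZ Z) : c + (a ⊔ b) = (c + a) ⊔ (c + b) := by
  obtain ⟨f, rfl⟩ := Submodule.Quotient.mk_surjective _ a
  obtain ⟨g, rfl⟩ := Submodule.Quotient.mk_surjective _ b
  obtain ⟨h, rfl⟩ := Submodule.Quotient.mk_surjective _ c
  rw [qmk_sup, ← Submodule.Quotient.mk_add, ← Submodule.Quotient.mk_add,
    ← Submodule.Quotient.mk_add, qmk_sup, add_sup]

lemma qadd_le_add_left {a b : QZ Z} (h : a ≤ b) (c : QZ Z) : c + a ≤ c + b := by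
  rw [← sup_eq_right] at h ⊢
  rw [← qadd_sup, h]

noncomputable instance : NormedAddCommGroup (QZ Z) :=
  letI : IsClosed ((czero Z : Set (ℕ →ᵇ Z))) := czero_isClosed Z
  Submodule.Quotient.normedAddCommGroup (czero Z)

instance : IsOrderedAddMonoid (QZ Z) where
  add_le_add_left := fun a b h c => by
    rw [add_comm a, add_comm b]; exact qadd_le_add_left h c

instance : HasSolidNorm (QZ Z) where
  solid := by
      intro a b h
      refine le_of_forall_pos_le_add ?_
      intro ε hε
      obtain ⟨f, rfl⟩ := Submodule.Quotient.mk_surjective _ a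
      obtain ⟨g, hgb, hgn⟩ := Submodule.Quotient.norm_mk_lt b hε
      rw [← hgb] at h hgn ⊢
      rw [← qmk_abs, ← qmk_abs] at h
      have h1 : π f ≤ π |g| := le_trans (le_abs_self _) (le_trans h (le_of_eq rfl))
      have h2 : -(π f) ≤ π |g| := le_trans (neg_le_abs _) h
      have h3 : -(π |g|) ≤ π f := by
        have h4 := qadd_le_add_left h2 (π f - π |g|)
        have e1 : π f - π |g| + -(π f) = -(π |g|) := by abel
        have e2 : π f - π |g| + π |g| = π f := by abel
        rwa [e1, e2] at h4
      have hmkf' : π ((f ⊓ |g|) ⊔ (-|g|)) = π f := by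
        rw [← qmk_sup, ← qmk_inf, qmk_neg, inf_eq_left.mpr h1, sup_eq_left.mpr h3]
      have hg0 : (0 : ℕ →ᵇ Z) ≤ |g| := abs_nonneg g
      have s1 : (f ⊓ |g|) ⊔ (-|g|) ≤ |g| :=
        sup_le inf_le_right ((neg_nonpos_of_nonneg hg0).trans hg0)
      have s2 : -((f ⊓ |g|) ⊔ (-|g|)) ≤ |g| := by
        have h5 : -|g| ≤ (f ⊓ |g|) ⊔ (-|g|) := le_sup_right
        have := neg_le_neg h5
        rwa [neg_neg] at this
      have habs : |(f ⊓ |g|) ⊔ (-|g|)| ≤ |g| := abs_le'.mpr ⟨s1, s2⟩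
      have hno : ‖(f ⊓ |g|) ⊔ (-|g|)‖ ≤ ‖g‖ := norm_le_norm_of_abs_le_abs habs
      calc ‖π f‖ = ‖π ((f ⊓ |g|) ⊔ (-|g|))‖ := by rw [hmkf']
        _ ≤ ‖(f ⊓ |g|) ⊔ (-|g|)‖ := Submodule.Quotient.norm_mk_le (czero Z) _
        _ ≤ ‖g‖ := hno
        _ ≤ ‖π g‖ + ε := le_of_lt hgn

/-- The linear map `Z → ℓ∞(ℕ, Z)` sending `z` to the constant sequence. -/
def constLin : Z →ₗ[ℝ] (ℕ →ᵇ Z) where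
  toFun z := BoundedContinuousFunction.const ℕ z
  map_add' a b := by ext k; simp
  map_smul' c a := by ext k; simp

lemma qmk_const_norm (z : Z) : ‖(π (BoundedContinuousFunction.const ℕ z) : QZ Z)‖ = ‖z‖ := by
  refine le_antisymm ((Submodule.Quotient.norm_mk_le (czero Z)
      (BoundedContinuousFunction.const ℕ z)).trans (norm_const_le z)) ?_
  · refine le_of_forall_pos_le_add ?_
    intro ε hε
    obtain ⟨m, hm, hmn⟩ := Submodule.Quotient.norm_mk_lt
      (π (BoundedContinuousFunction.const ℕ z)) (half_pos hε)
    have hc : m - BoundedContinuousFunction.const ℕ z ∈ czero Z :=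
      (Submodule.Quotient.eq _).mp hm
    rw [mem_czero] at hc
    have h2 := (NormedAddCommGroup.tendsto_nhds_zero.mp hc) (ε / 2) (half_pos hε)
    obtain ⟨k, hk⟩ := h2.exists
    have h3 : ‖z‖ ≤ ‖m k‖ + ‖(m - BoundedContinuousFunction.const ℕ z) k‖ := by
      have e : (m - BoundedContinuousFunction.const ℕ z) k = m k - z := by simp
      calc ‖z‖ = ‖m k - (m k - z)‖ := by rw [sub_sub_cancel]
        _ ≤ ‖m k‖ + ‖m k - z‖ := norm_sub_le _ _
        _ = ‖m k‖ + ‖(m - BoundedContinuousFunction.const ℕ z) k‖ := by rw [e]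
    have h4 : ‖m k‖ ≤ ‖m‖ := norm_coe_le_norm m k
    calc ‖z‖ ≤ ‖m k‖ + ‖(m - BoundedContinuousFunction.const ℕ z) k‖ := h3
      _ ≤ ‖m‖ + ε / 2 := add_le_add h4 (le_of_lt hk)
      _ ≤ (‖π (BoundedContinuousFunction.const ℕ z)‖ + ε / 2) + ε / 2 :=
          add_le_add (le_of_lt hmn) le_rfl
      _ = ‖π (BoundedContinuousFunction.const ℕ z)‖ + ε := by ring

/-- The canonical lattice isometric embedding of `Z` into `ℓ∞(ℕ,Z)/c₀`. -/
def embQ : Z →ₗᵢ[ℝ] QZ Z :=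
  ⟨(czero Z).mkQ.comp constLin, fun z => qmk_const_norm z⟩

lemma embQ_apply (z : Z) :
    embQ (Z := Z) z = π (BoundedContinuousFunction.const ℕ z) := rfl

lemma embQ_sup (a b : Z) :
    embQ (Z := Z) (a ⊔ b) = embQ (Z := Z) a ⊔ embQ (Z := Z) b := by
  have hc : BoundedContinuousFunction.const ℕ (a ⊔ b)
      = BoundedContinuousFunction.const ℕ a ⊔ BoundedContinuousFunction.const ℕ b := by
    ext k
    simp
  rw [embQ_apply, embQ_apply, embQ_apply, qmk_sup, hc]

end AuxiliaryConstruction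

/-! ### Closed sublattice generated by a countable family -/

noncomputable section SubLat

variable {V : Type} [NormedAddCommGroup V] [Lattice V] [IsOrderedAddMonoid V] [HasSolidNorm V] [NormedSpace ℝ V] (g : ℕ → V)

/-- Approximating levels for the sublattice generated by the range of `g`. -/
def SGen : ℕ → Set V
  | 0 => Set.range g ∪ {0}
  | n + 1 =>
    SGen n ∪ Set.image2 (· + ·) (SGen n) (SGen n)
      ∪ (⋃ q : ℚ, (fun v => (q : ℝ) • v) '' SGen n)
      ∪ Set.image2 (· ⊔ ·) (SGen n) (SGen n)
      ∪ Set.image2 (· ⊓ ·) (SGen n) (SGen n)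

lemma SGen_zero_eq : SGen g 0 = Set.range g ∪ {0} := rfl

lemma SGen_succ_eq (n : ℕ) : SGen g (n + 1) =
    SGen g n ∪ Set.image2 (· + ·) (SGen g n) (SGen g n)
      ∪ (⋃ q : ℚ, (fun v => (q : ℝ) • v) '' SGen g n)
      ∪ Set.image2 (· ⊔ ·) (SGen g n) (SGen g n)
      ∪ Set.image2 (· ⊓ ·) (SGen g n) (SGen g n) := rfl

lemma mem_SGen_zero {a : V} : a ∈ SGen g 0 ↔ (∃ i, g i = a) ∨ a = 0 := by
  rw [SGen_zero_eq]
  simp only [Set.mem_union, Set.mem_range, Set.mem_singleton_iff]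

lemma mem_SGen_succ {a : V} {n : ℕ} : a ∈ SGen g (n + 1) ↔
    a ∈ SGen g n ∨ (∃ u ∈ SGen g n, ∃ v ∈ SGen g n, u + v = a)
      ∨ (∃ q : ℚ, ∃ u ∈ SGen g n, (q : ℝ) • u = a)
      ∨ (∃ u ∈ SGen g n, ∃ v ∈ SGen g n, u ⊔ v = a)
      ∨ (∃ u ∈ SGen g n, ∃ v ∈ SGen g n, u ⊓ v = a) := by
  rw [SGen_succ_eq]
  simp only [Set.mem_union, Set.mem_image2, Set.mem_iUnion, Set.mem_image]
  constructor
  · rintro ((((h | h) | h) | h) | h)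
    · exact Or.inl h
    · obtain ⟨u, hu, v, hv, huv⟩ := h
      exact Or.inr (Or.inl ⟨u, hu, v, hv, huv⟩)
    · obtain ⟨q, u, hu, hq⟩ := h
      exact Or.inr (Or.inr (Or.inl ⟨q, u, hu, hq⟩))
    · obtain ⟨u, hu, v, hv, huv⟩ := h
      exact Or.inr (Or.inr (Or.inr (Or.inl ⟨u, hu, v, hv, huv⟩)))
    · obtain ⟨u, hu, v, hv, huv⟩ := h
      exact Or.inr (Or.inr (Or.inr (Or.inr ⟨u, hu, v, hv, huv⟩)))
  · rintro (h | ⟨u, hu, v, hv, huv⟩ | ⟨q, u, hu, hq⟩ | ⟨u, hu, v, hv, huv⟩ | ⟨u, hu, v, hv, huv⟩)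
    · exact Or.inl (Or.inl (Or.inl (Or.inl h)))
    · exact Or.inl (Or.inl (Or.inl (Or.inr ⟨u, hu, v, hv, huv⟩)))
    · exact Or.inl (Or.inl (Or.inr ⟨q, u, hu, hq⟩))
    · exact Or.inl (Or.inr ⟨u, hu, v, hv, huv⟩)
    · exact Or.inr ⟨u, hu, v, hv, huv⟩

lemma SGen_subset_succ (n : ℕ) : SGen g n ⊆ SGen g (n + 1) := fun a ha =>
  (mem_SGen_succ g).mpr (Or.inl ha)

lemma SGen_mono : Monotone (SGen g) :=
  monotone_nat_of_le_succ (SGen_subset_succ g)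

lemma SGen_countable : ∀ n, (SGen g n).Countable
  | 0 => (Set.countable_range g).union (Set.countable_singleton 0)
  | n + 1 => by
    have h := SGen_countable n
    rw [SGen_succ_eq]
    refine Set.Countable.union (Set.Countable.union (Set.Countable.union
      (Set.Countable.union h ?_) ?_) ?_) ?_
    · exact h.image2 h _
    · exact Set.countable_iUnion fun q : ℚ => h.image _
    · exact h.image2 h _
    · exact h.image2 h _

/-- The countable set generating the sublattice. -/
def genSet : Set V := ⋃ n, SGen g n

lemma genSet_countable : (genSet g).Countable :=
  Set.countable_iUnion (SGen_countable g)

lemma mem_genSet_of_gen (n : ℕ) : g n ∈ genSet g :=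
  Set.mem_iUnion.mpr ⟨0, (mem_SGen_zero g).mpr (Or.inl ⟨n, rfl⟩)⟩

lemma zero_mem_genSet : (0 : V) ∈ genSet g :=
  Set.mem_iUnion.mpr ⟨0, (mem_SGen_zero g).mpr (Or.inr rfl)⟩

lemma genSet_binop {a b : V} {op : V → V → V}
    (hop : ∀ n, ∀ x ∈ SGen g n, ∀ y ∈ SGen g n, op x y ∈ SGen g (n + 1))
    (ha : a ∈ genSet g) (hb : b ∈ genSet g) : op a b ∈ genSet g := by
  obtain ⟨m, hm⟩ := Set.mem_iUnion.mp ha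
  obtain ⟨n, hn⟩ := Set.mem_iUnion.mp hb
  have hm' : a ∈ SGen g (max m n) := SGen_mono g (le_max_left m n) hm
  have hn' : b ∈ SGen g (max m n) := SGen_mono g (le_max_right m n) hn
  exact Set.mem_iUnion.mpr ⟨max m n + 1, hop _ _ hm' _ hn'⟩

lemma genSet_add {a b : V} (ha : a ∈ genSet g) (hb : b ∈ genSet g) :
    a + b ∈ genSet g :=
  genSet_binop g (fun n x hx y hy =>
    (mem_SGen_succ g).mpr (Or.inr (Or.inl ⟨x, hx, y, hy, rfl⟩))) ha hb

lemma genSet_sup {a b : V} (ha : a ∈ genSet g) (hb : b ∈ genSet g) :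
    a ⊔ b ∈ genSet g :=
  genSet_binop g (fun n x hx y hy =>
    (mem_SGen_succ g).mpr (Or.inr (Or.inr (Or.inr (Or.inl ⟨x, hx, y, hy, rfl⟩))))) ha hb

lemma genSet_inf {a b : V} (ha : a ∈ genSet g) (hb : b ∈ genSet g) :
    a ⊓ b ∈ genSet g :=
  genSet_binop g (fun n x hx y hy =>
    (mem_SGen_succ g).mpr (Or.inr (Or.inr (Or.inr (Or.inr ⟨x, hx, y, hy, rfl⟩))))) ha hb

lemma genSet_qsmul {a : V} (q : ℚ) (ha : a ∈ genSet g) :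
    (q : ℝ) • a ∈ genSet g := by
  obtain ⟨m, hm⟩ := Set.mem_iUnion.mp ha
  exact Set.mem_iUnion.mpr ⟨m + 1,
    (mem_SGen_succ g).mpr (Or.inr (Or.inr (Or.inl ⟨q, a, hm, rfl⟩)))⟩

/-- The closed sublattice (as a submodule) generated by the range of `g`. -/
def latSub : Submodule ℝ V where
  carrier := closure (genSet g)
  zero_mem' := subset_closure (zero_mem_genSet g)
  add_mem' := fun ha hb =>
    map_mem_closure₂ continuous_add ha hb fun _ hx _ hy => genSet_add g hx hy
  smul_mem' := by
    intro c v hv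
    have hc : c ∈ closure (Set.range ((↑) : ℚ → ℝ)) := Rat.denseRange_cast c
    exact map_mem_closure₂ continuous_smul hc hv fun _ hx _ hy => by
      obtain ⟨q, rfl⟩ := hx
      exact genSet_qsmul g q hy

lemma latSub_isClosed : IsClosed ((latSub g : Set V)) := isClosed_closure

lemma mem_latSub_gen (n : ℕ) : g n ∈ latSub g :=
  subset_closure (mem_genSet_of_gen g n)

lemma latSub_sup_mem {a b : V} (ha : a ∈ latSub g) (hb : b ∈ latSub g) :
    a ⊔ b ∈ latSub g :=
  map_mem_closure₂ continuous_sup ha hb fun _ hx _ hy => genSet_sup g hx hy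

lemma latSub_inf_mem {a b : V} (ha : a ∈ latSub g) (hb : b ∈ latSub g) :
    a ⊓ b ∈ latSub g :=
  map_mem_closure₂ continuous_inf ha hb fun _ hx _ hy => genSet_inf g hx hy

noncomputable instance latSubMax : Max ↥(latSub g) :=
  ⟨fun a b => ⟨a.1 ⊔ b.1, latSub_sup_mem g a.2 b.2⟩⟩

noncomputable instance latSubMin : Min ↥(latSub g) :=
  ⟨fun a b => ⟨a.1 ⊓ b.1, latSub_inf_mem g a.2 b.2⟩⟩

noncomputable instance latSubLattice : Lattice ↥(latSub g) :=
  Subtype.coe_injective.lattice _ Iff.rfl Iff.rfl (fun _ _ => rfl) (fun _ _ => rfl)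

@[simp] lemma latSub_coe_sup (a b : ↥(latSub g)) :
    ((a ⊔ b : ↥(latSub g)) : V) = (a : V) ⊔ (b : V) := rfl

lemma latSub_le_iff {a b : ↥(latSub g)} : a ≤ b ↔ (a : V) ≤ (b : V) := Iff.rfl

instance latSubSolid : HasSolidNorm ↥(latSub g) where
  solid := by
    intro a b h
    have h' : |(a : V)| ≤ |(b : V)| := h
    show ‖(a : V)‖ ≤ ‖(b : V)‖
    exact HasSolidNorm.solid h'

noncomputable instance latSubNLACG : IsOrderedAddMonoid ↥(latSub g) :=
  { add_le_add_left := by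
      intro a b h c
      have h' : (a : V) ≤ (b : V) := h
      show ((a + c : ↥(latSub g)) : V) ≤ ((b + c : ↥(latSub g)) : V)
      push_cast
      exact add_le_add h' le_rfl }

noncomputable instance latSubComplete [CompleteSpace V] : CompleteSpace ↥(latSub g) :=
  (latSub_isClosed g).completeSpace_coe

noncomputable instance latSubSeparable : TopologicalSpace.SeparableSpace ↥(latSub g) :=
  ((genSet_countable g).isSeparable.closure).separableSpace

end SubLat

section MainTheorem

/-- A Banach lattice `Z` is separably `𝓑𝓛`-injective if for every separable
Banach lattice `Y`, every closed sublattice `X ⊆ Y` (given here by a lattice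
isometric embedding `j : X → Y`) and every lattice homomorphism `T : X → Z`,
there is a lattice homomorphism `T̃ : Y → Z` with `T̃ ∘ j = T`. -/
def SeparablyBLInjective (Z : Type)
    [NormedAddCommGroup Z] [Lattice Z] [IsOrderedAddMonoid Z] [HasSolidNorm Z] [NormedSpace ℝ Z] [CompleteSpace Z] : Prop :=
  ∀ (X Y : Type)
    (_ : NormedAddCommGroup X) (_ : Lattice X) (_ : IsOrderedAddMonoid X)
    (_ : HasSolidNorm X) (_ : NormedSpace ℝ X) (_ : CompleteSpace X)
    (_ : NormedAddCommGroup Y) (_ : Lattice Y) (_ : IsOrderedAddMonoid Y)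
    (_ : HasSolidNorm Y) (_ : NormedSpace ℝ Y) (_ : CompleteSpace Y)
    (_ : TopologicalSpace.SeparableSpace Y)
    (j : X →ₗᵢ[ℝ] Y) (T : X →L[ℝ] Z),
    (∀ a b : X, j (a ⊔ b) = j a ⊔ j b) → (∀ a b : X, T (a ⊔ b) = T a ⊔ T b) →
    ∃ T' : Y →L[ℝ] Z, (∀ a b : Y, T' (a ⊔ b) = T' a ⊔ T' b) ∧ ∀ x, T' (j x) = T x

/-- Every separably 𝓑𝓛-injective Banach lattice has the countable interpolation
property: for sequences with  for all  there is an
interpolating element  with  for all . -/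
theorem sep_injective_interpolation (Z : Type)
    [NormedAddCommGroup Z] [Lattice Z] [IsOrderedAddMonoid Z] [HasSolidNorm Z] [NormedSpace ℝ Z] [CompleteSpace Z]
    (hZ : SeparablyBLInjective Z) (x y : ℕ → Z)
    (hxy : ∀ n m, x n ≤ y m) :
    ∃ z : Z, ∀ n m, x n ≤ z ∧ z ≤ y m := by
  classical
  -- generators of `X`, the closed sublattice of `Z` generated by all `x n`, `y m`
  set gX : ℕ → Z := fun n => if n % 2 = 0 then x (n / 2) else y (n / 2) with hgX
  have hgx : ∀ n, gX (2 * n) = x n := by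
    intro n; simp [hgX, Nat.mul_div_cancel_left n (by norm_num : 0 < 2), Nat.mul_mod_right]
  have hgy : ∀ n, gX (2 * n + 1) = y n := by
    intro n
    have h1 : (2 * n + 1) % 2 = 1 := by omega
    have h2 : (2 * n + 1) / 2 = n := by omega
    simp [hgX, h1, h2]
  -- the bounded sequence of partial suprema of `x`
  have hbound : ∀ k : ℕ, ‖partialSups x k‖ ≤ ‖x 0‖ + ‖y 0‖ := by
    intro k
    have hle1 : partialSups x k ≤ y 0 := partialSups_le _ _ _ fun i _ => hxy i 0
    have hle2 : x 0 ≤ partialSups x k := le_partialSups_of_le x (Nat.zero_le k)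
    have habs : |partialSups x k| ≤ |x 0| + |y 0| := by
      refine abs_le'.mpr ⟨?_, ?_⟩
      · exact hle1.trans ((le_abs_self _).trans (le_add_of_nonneg_left (abs_nonneg _)))
      · have := neg_le_neg hle2
        exact this.trans ((neg_le_abs _).trans (le_add_of_nonneg_right (abs_nonneg _)))
    have h2 : ‖partialSups x k‖ ≤ ‖|x 0| + |y 0|‖ := by
      refine norm_le_norm_of_abs_le_abs ?_
      rwa [abs_of_nonneg (by positivity : (0:Z) ≤ |x 0| + |y 0|)]
    exact h2.trans ((norm_add_le _ _).trans (by rw [norm_abs_eq_norm, norm_abs_eq_norm]))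
  set ξW : ℕ →ᵇ Z :=
    ⟨⟨fun k => partialSups x k, continuous_of_discreteTopology⟩,
      ⟨2 * (‖x 0‖ + ‖y 0‖), fun a b => by
        have := dist_le_norm_add_norm (partialSups x a) (partialSups x b)
        have ha := hbound a
        have hb := hbound b
        dsimp only
        linarith⟩⟩ with hξW
  have hξWapp : ∀ k, ξW k = partialSups x k := fun _ => rfl
  set ξ : QZ Z := Submodule.Quotient.mk ξW with hξ
  -- generators of `Y`
  set gY : ℕ → QZ Z := fun n => match n with
    | 0 => ξ
    | k + 1 => embQ (Z := Z) (gX k) with hgY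
  -- the two sublattices
  set X := ↥(latSub gX) with hX
  set Y := ↥(latSub gY) with hY
  -- embQ maps the generating set of X into that of Y
  have hembQinf : ∀ a b : Z, embQ (Z := Z) (a ⊓ b) = embQ (Z := Z) a ⊓ embQ (Z := Z) b := by
    intro a b
    have habs : a ⊓ b = a + b - a ⊔ b := by
      rw [eq_sub_iff_add_eq, inf_add_sup]
    have habs' : (embQ (Z := Z) a) ⊓ embQ (Z := Z) b
        = embQ (Z := Z) a + embQ (Z := Z) b - embQ (Z := Z) a ⊔ embQ (Z := Z) b := by
      rw [eq_sub_iff_add_eq, inf_add_sup]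
    rw [habs, habs', map_sub, map_add, embQ_sup]
  have hSGen : ∀ n, ∀ v ∈ SGen gX n, (embQ (Z := Z) v) ∈ SGen gY n := by
    intro n
    induction n with
    | zero =>
      intro v hv
      rcases (mem_SGen_zero gX).mp hv with ⟨i, rfl⟩ | rfl
      · exact (mem_SGen_zero gY).mpr (Or.inl ⟨i + 1, rfl⟩)
      · rw [map_zero]
        exact (mem_SGen_zero gY).mpr (Or.inr rfl)
    | succ n ih =>
      intro v hv
      rcases (mem_SGen_succ gX).mp hv with
        hv | ⟨a, ha, b, hb, rfl⟩ | ⟨q, a, ha, rfl⟩ | ⟨a, ha, b, hb, rfl⟩ | ⟨a, ha, b, hb, rfl⟩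
      · exact SGen_subset_succ gY n (ih _ hv)
      · exact (mem_SGen_succ gY).mpr (Or.inr (Or.inl ⟨_, ih _ ha, _, ih _ hb, (map_add _ _ _).symm⟩))
      · refine (mem_SGen_succ gY).mpr (Or.inr (Or.inr (Or.inl ⟨q, _, ih _ ha, ?_⟩)))
        rw [← map_smul]
      · exact (mem_SGen_succ gY).mpr
          (Or.inr (Or.inr (Or.inr (Or.inl ⟨_, ih _ ha, _, ih _ hb, (embQ_sup a b).symm⟩))))
      · exact (mem_SGen_succ gY).mpr
          (Or.inr (Or.inr (Or.inr (Or.inr ⟨_, ih _ ha, _, ih _ hb, (hembQinf a b).symm⟩))))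
  have hmaps : ∀ v : Z, v ∈ latSub gX → (embQ (Z := Z) v) ∈ latSub gY := by
    intro v hv
    refine map_mem_closure (embQ (Z := Z)).continuous hv ?_
    rintro w hw
    obtain ⟨n, hn⟩ := Set.mem_iUnion.mp hw
    exact Set.mem_iUnion.mpr ⟨n, hSGen n _ hn⟩
  -- the lattice isometric embedding j : X → Y
  set j : X →ₗᵢ[ℝ] Y :=
    { toFun := fun a => (⟨embQ (Z := Z) (a : Z), hmaps _ a.2⟩ : Y)
      map_add' := fun a b => Subtype.ext (map_add (embQ (Z := Z)) a.1 b.1)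
      map_smul' := fun c a => Subtype.ext (map_smul (embQ (Z := Z)) c a.1)
      norm_map' := fun a => embQ.norm_map (a : Z) } with hj
  have hjsup : ∀ a b : X, j (a ⊔ b) = j a ⊔ j b := by
    intro a b
    refine Subtype.ext ?_
    show embQ (Z := Z) ((a : Z) ⊔ (b : Z)) = embQ (Z := Z) (a : Z) ⊔ embQ (Z := Z) (b : Z)
    exact embQ_sup _ _
  -- the inclusion T : X → Z
  set T : X →L[ℝ] Z := (latSub gX).subtypeₗᵢ.toContinuousLinearMap with hT
  have hTapp : ∀ a : X, T a = (a : Z) := fun _ => rfl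
  have hTsup : ∀ a b : X, T (a ⊔ b) = T a ⊔ T b := fun _ _ => rfl
  -- apply separable injectivity
  obtain ⟨T', hT'sup, hT'j⟩ := hZ X Y inferInstance inferInstance inferInstance
    inferInstance inferInstance inferInstance inferInstance inferInstance inferInstance
    inferInstance inferInstance inferInstance inferInstance j T hjsup hTsup
  -- the interpolating element
  have hξmem : ξ ∈ latSub gY := mem_latSub_gen gY 0
  set ζ : Y := ⟨ξ, hξmem⟩ with hζ
  refine ⟨T' ζ, fun n m => ⟨?_, ?_⟩⟩
  · -- x n ≤ T' ζ
    have hxmem : x n ∈ latSub gX := by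
      have := mem_latSub_gen gX (2 * n)
      rwa [hgx n] at this
    have hQ : (embQ (Z := Z) (x n)) ⊔ ξ = ξ := by
      rw [embQ_apply, hξ, qmk_sup]
      refine (Submodule.Quotient.eq _).mpr ?_
      rw [mem_czero]
      have hev : ∀ᶠ k in atTop,
          ((BoundedContinuousFunction.const ℕ (x n) ⊔ ξW) - ξW) k = 0 := by
        filter_upwards [eventually_ge_atTop n] with k hk
        have hle : x n ≤ ξW k := by
          rw [hξWapp]
          exact le_partialSups_of_le x hk
        simp only [BoundedContinuousFunction.coe_sub, BoundedContinuousFunction.coe_sup,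
          Pi.sub_apply, Pi.sup_apply, BoundedContinuousFunction.const_apply]
        rw [sup_eq_right.mpr hle, sub_self]
      exact tendsto_const_nhds.congr' (by filter_upwards [hev] with k hk; rw [hk])
    have hYle : j ⟨x n, hxmem⟩ ⊔ ζ = ζ := by
      refine Subtype.ext ?_
      show (embQ (Z := Z) (x n)) ⊔ ξ = ξ
      exact hQ
    have := congrArg T' hYle
    rw [hT'sup] at this
    have hTx : T' (j ⟨x n, hxmem⟩) = x n := by
      rw [hT'j ⟨x n, hxmem⟩, hTapp]
    rw [hTx] at this
    exact sup_eq_right.mp this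
  · -- T' ζ ≤ y m
    have hymem : y m ∈ latSub gX := by
      have := mem_latSub_gen gX (2 * m + 1)
      rwa [hgy m] at this
    have hQ : ξ ⊔ (embQ (Z := Z) (y m)) = embQ (Z := Z) (y m) := by
      rw [embQ_apply, hξ, qmk_sup]
      congr 1
      refine sup_eq_right.mpr ?_
      intro k
      show ξW k ≤ y m
      rw [hξWapp]
      exact partialSups_le _ _ _ fun i _ => hxy i m
    have hYle : ζ ⊔ j ⟨y m, hymem⟩ = j ⟨y m, hymem⟩ := by
      refine Subtype.ext ?_
      show ξ ⊔ (embQ (Z := Z) (y m)) = embQ (Z := Z) (y m)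
      exact hQ
    have := congrArg T' hYle
    rw [hT'sup] at this
    have hTy : T' (j ⟨y m, hymem⟩) = y m := by
      rw [hT'j ⟨y m, hymem⟩, hTapp]
    rw [hTy] at this
    exact sup_eq_right.mp this

end MainTheorem
end

section
/- Let (Ω, Σ, ν) be a finite measure space, Z a Banach lattice, and T : L₁(ν) → Z a non-zero lattice homomorphism. Then there exists a measurable set B ⊆ Ω with ν(B) > 0 such that the restriction of T to L₁(B) (the ideal of functions supported on B) is a lattice isomorphism onto its range, i.e. bounded below. -/
open MeasureTheory Set Filter Topology ENNReal

noncomputable section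

namespace LatHomAux

variable {Ω : Type} [MeasurableSpace Ω] (ν : Measure Ω) [IsFiniteMeasure ν]

/-- The `L¹` indicator of a measurable set. -/
def ind {A : Set Ω} (hA : MeasurableSet A) : Lp ℝ 1 ν :=
  indicatorConstLp 1 hA (measure_ne_top ν A) (1 : ℝ)

lemma ind_congr {A A' : Set Ω} (hA : MeasurableSet A) (hA' : MeasurableSet A') (h : A = A') :
    ind ν hA = ind ν hA' := by subst h; rfl

lemma ind_disjoint_union {A A' : Set Ω} (hA : MeasurableSet A) (hA' : MeasurableSet A')
    (hd : Disjoint A A') : ind ν (hA.union hA') = ind ν hA + ind ν hA' :=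
  indicatorConstLp_disjoint_union hA hA' _ _ hd 1

lemma norm_ind {A : Set Ω} (hA : MeasurableSet A) : ‖ind ν hA‖ = (ν A).toReal := by
  rw [ind, norm_indicatorConstLp one_ne_zero one_ne_top]
  simp
  rfl

lemma ind_null {A : Set Ω} (hA : MeasurableSet A) (h : ν A = 0) : ind ν hA = 0 := by
  rw [← norm_eq_zero, norm_ind, h, ENNReal.toReal_zero]

lemma smul_ind {A : Set Ω} (hA : MeasurableSet A) (hμ : ν A ≠ ∞) (c : ℝ) :
    indicatorConstLp 1 hA hμ c = c • ind ν hA := by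
  ext1
  filter_upwards [indicatorConstLp_coeFn (c := c) (hμs := hμ),
    Lp.coeFn_smul c (ind ν hA), indicatorConstLp_coeFn (c := (1:ℝ)) (hμs := measure_ne_top ν A)]
        with x h1 h2 h3
  rw [h1, h2, Pi.smul_apply, ind, h3]
  by_cases hx : x ∈ A <;> simp [Set.indicator_apply, hx]

lemma sum_ind {f : ℕ → Set Ω} (hm : ∀ i, MeasurableSet (f i)) (hd : Pairwise (Function.onFun Disjoint f))
    (s : Finset ℕ) :
    ∑ i ∈ s, ind ν (hm i) =
      ind ν (MeasurableSet.biUnion s.countable_toSet (fun i _ => hm i)) := by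
  classical
  induction s using Finset.induction_on with
  | empty =>
      rw [Finset.sum_empty]
      exact (ind_null ν _ (by simp)).symm
  | @insert a s ha ih =>
      rw [Finset.sum_insert ha, ih]
      have hdisj : Disjoint (f a) (⋃ i ∈ s, f i) := by
        rw [Set.disjoint_iUnion₂_right]
        intro i hi
        exact hd (show a ≠ i from fun h => ha (h ▸ hi))
      rw [← ind_disjoint_union ν (hm a) _ hdisj]
      exact ind_congr ν _ _ (by simp [Set.biUnion_insert])

lemma hasSum_ind {f : ℕ → Set Ω} (hm : ∀ i, MeasurableSet (f i)) (hd : Pairwise (Function.onFun Disjoint f)) :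
    HasSum (fun i => ind ν (hm i)) (ind ν (MeasurableSet.iUnion hm)) := by
  have htot : ∑' i, ν (f i) ≠ ∞ := by
    rw [← measure_iUnion hd hm]; exact measure_ne_top ν _
  rw [HasSum, tendsto_iff_norm_sub_tendsto_zero]
  have hbound : ∀ s : Finset ℕ,
      ‖(∑ i ∈ s, ind ν (hm i)) - ind ν (MeasurableSet.iUnion hm)‖ ≤
        (∑' i : {i // i ∉ s}, ν (f i.1)).toReal := by
    intro s
    have hsub : (⋃ i, f i) \ (⋃ i ∈ s, f i) ⊆ ⋃ i : {i // i ∉ s}, f i.1 := by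
      rintro x ⟨hx1, hx2⟩
      obtain ⟨j, hj⟩ := Set.mem_iUnion.mp hx1
      have hjs : j ∉ s := fun h => hx2 (Set.mem_biUnion h hj)
      exact Set.mem_iUnion.mpr ⟨⟨j, hjs⟩, hj⟩
    have htail_ne : (∑' i : {i // i ∉ s}, ν (f i.1)) ≠ ∞ := by
      refine ne_top_of_le_ne_top htot ?_
      exact ENNReal.tsum_comp_le_tsum_of_injective Subtype.coe_injective _
    have hms : MeasurableSet (⋃ i ∈ s, f i) :=
      MeasurableSet.biUnion s.countable_toSet (fun i _ => hm i)
    have hsplit : ind ν (MeasurableSet.iUnion hm) =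
        ind ν hms + ind ν ((MeasurableSet.iUnion hm).diff hms) := by
      rw [← ind_disjoint_union ν hms _ disjoint_sdiff_right]
      exact ind_congr ν _ _ (by rw [Set.union_diff_self,
        Set.union_eq_self_of_subset_left (Set.iUnion₂_subset fun i _ => Set.subset_iUnion f i)])
    rw [sum_ind ν hm hd s, hsplit]
    have : ind ν hms - (ind ν hms + ind ν ((MeasurableSet.iUnion hm).diff hms)) =
        -(ind ν ((MeasurableSet.iUnion hm).diff hms)) := by abel
    rw [this, norm_neg, norm_ind]
    exact ENNReal.toReal_mono htail_ne
      ((measure_mono hsub).trans (measure_iUnion_le _))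
  refine squeeze_zero (fun s => norm_nonneg _) hbound ?_
  have h0 : Tendsto (fun s : Finset ℕ => ∑' i : {i // i ∉ s}, ν (f i.1)) atTop (𝓝 0) :=
    ENNReal.tendsto_tsum_compl_atTop_zero htot
  have h1 : Tendsto ENNReal.toReal (𝓝 0) (𝓝 (0:ℝ)) := by
    simpa using ENNReal.tendsto_toReal (a := 0) (by simp)
  exact h1.comp h0

open scoped Classical in
/-- The signed measure `A ↦ ψ(χ_A)` associated with a continuous linear functional on `L¹`. -/
def funcMeasure (ψ : Lp ℝ 1 ν →L[ℝ] ℝ) : SignedMeasure Ω where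
  measureOf' A := if h : MeasurableSet A then ψ (ind ν h) else 0
  empty' := by
    show (if h : MeasurableSet (∅ : Set Ω) then ψ (ind ν h) else 0) = 0
    rw [dif_pos MeasurableSet.empty, ind_null ν _ measure_empty, map_zero]
  not_measurable' := fun _ h => dif_neg h
  m_iUnion' := by
    intro f hm hd
    show HasSum (fun i => if h : MeasurableSet (f i) then ψ (ind ν h) else 0)
      (if h : MeasurableSet (⋃ i, f i) then ψ (ind ν h) else 0)
    have h1 : (fun i => if h : MeasurableSet (f i) then ψ (ind ν h) else 0) =
        fun i => ψ (ind ν (hm i)) := funext fun i => dif_pos (hm i)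
    rw [h1, dif_pos (MeasurableSet.iUnion hm)]
    exact (hasSum_ind ν hm hd).mapL ψ

open scoped Classical in
lemma funcMeasure_apply (ψ : Lp ℝ 1 ν →L[ℝ] ℝ) {A : Set Ω} (hA : MeasurableSet A) :
    funcMeasure ν ψ A = ψ (ind ν hA) := by
  show (if h : MeasurableSet A then ψ (ind ν h) else 0) = _
  exact dif_pos hA

/-- Multiplication by the indicator of `B`, as a continuous linear operator on `L¹`. -/
def mulInd {B : Set Ω} (hB : MeasurableSet B) : Lp ℝ 1 ν →L[ℝ] Lp ℝ 1 ν :=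
  LinearMap.mkContinuous
    { toFun := fun f => (MemLp.indicator hB (Lp.memLp f)).toLp (B.indicator f)
      map_add' := fun f g => by
        rw [← MemLp.toLp_add]
        apply MemLp.toLp_congr
        filter_upwards [Lp.coeFn_add f g] with x hx
        by_cases hxB : x ∈ B
        · simp only [Set.indicator_of_mem hxB, Pi.add_apply]
          simpa using hx
        · simp [Set.indicator_of_notMem hxB]
      map_smul' := fun c f => by
        show (MemLp.indicator hB (Lp.memLp (c • f))).toLp (B.indicator ⇑(c • f)) =
          c • (MemLp.indicator hB (Lp.memLp f)).toLp (B.indicator ⇑f)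
        rw [← MemLp.toLp_const_smul (p := 1) (μ := ν) (E := ℝ) (𝕜 := ℝ) c (MemLp.indicator hB (Lp.memLp f))]
        apply MemLp.toLp_congr
        filter_upwards [Lp.coeFn_smul c f] with x hx
        by_cases hxB : x ∈ B
        · simp only [Set.indicator_of_mem hxB, Pi.smul_apply]
          simpa using hx
        · simp [Set.indicator_of_notMem hxB] }
    1 (fun f => by
      rw [one_mul]
      calc ‖(MemLp.indicator hB (Lp.memLp f)).toLp (B.indicator f)‖
          = (eLpNorm (B.indicator (f : Ω → ℝ)) 1 ν).toReal := Lp.norm_toLp _ _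
        _ ≤ (eLpNorm (f : Ω → ℝ) 1 ν).toReal :=
            ENNReal.toReal_mono (Lp.eLpNorm_ne_top f) (eLpNorm_indicator_le _)
        _ = ‖f‖ := (Lp.norm_def f).symm)

lemma mulInd_coeFn {B : Set Ω} (hB : MeasurableSet B) (f : Lp ℝ 1 ν) :
    (mulInd ν hB f : Ω → ℝ) =ᵐ[ν] B.indicator f :=
  MemLp.coeFn_toLp (p := 1) (μ := ν) (E := ℝ) (MemLp.indicator hB (Lp.memLp f))

lemma mulInd_eq_self {B : Set Ω} (hB : MeasurableSet B) (f : Lp ℝ 1 ν)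
    (hf : ∀ᵐ x ∂ν, x ∉ B → (f : Ω → ℝ) x = 0) : mulInd ν hB f = f := by
  ext1
  filter_upwards [mulInd_coeFn ν hB f, hf] with x h1 h2
  rw [h1]
  by_cases hxB : x ∈ B <;> simp [Set.indicator_apply, hxB, h2]

lemma mulInd_indicatorConstLp {B A : Set Ω} (hB : MeasurableSet B) (hA : MeasurableSet A)
    (hμ : ν A ≠ ∞) (c : ℝ) :
    mulInd ν hB (indicatorConstLp 1 hA hμ c) =
      indicatorConstLp 1 (hA.inter hB) (measure_ne_top ν _) c := by
  ext1
  filter_upwards [mulInd_coeFn ν hB _,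
    indicatorConstLp_coeFn (p := 1) (μ := ν) (hs := hA) (hμs := hμ) (c := c),
    indicatorConstLp_coeFn (p := 1) (μ := ν) (hs := hA.inter hB)
      (hμs := measure_ne_top ν (A ∩ B)) (c := c)] with x h1 h2 h3
  rw [h1, h3]
  by_cases hxB : x ∈ B <;> by_cases hxA : x ∈ A <;>
    simp [Set.indicator_apply, hxB, hxA, h2]

end LatHomAux

set_option maxHeartbeats 2000000 in
/-- If `T : L₁(ν) → Z` is a non-zero lattice homomorphism from the `L₁` space
of a finite measure into a Banach lattice, then there is a measurable set `B`
of positive measure such that the restriction of `T` to the ideal `L₁(B)` of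
functions supported on `B` is a lattice isomorphism onto its range, i.e.
bounded below. -/
theorem lattice_hom_L1_restriction_iso {Ω Z : Type} [MeasurableSpace Ω]
    (ν : Measure Ω) [IsFiniteMeasure ν]
    [NormedAddCommGroup Z] [Lattice Z] [HasSolidNorm Z] [IsOrderedAddMonoid Z] [NormedSpace ℝ Z] [CompleteSpace Z]
    (T : Lp ℝ 1 ν →L[ℝ] Z) (hlat : ∀ f g : Lp ℝ 1 ν, T (f ⊔ g) = T f ⊔ T g)
    (hT : T ≠ 0) :
    ∃ B : Set Ω, MeasurableSet B ∧ 0 < ν B ∧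
      ∃ δ : ℝ, 0 < δ ∧
        ∀ f : Lp ℝ 1 ν, (∀ᵐ x ∂ν, x ∉ B → (f : Ω → ℝ) x = 0) →
          δ * ‖f‖ ≤ ‖T f‖ := by
  haveI : Fact ((1:ℝ≥0∞) ≤ 1) := ⟨le_rfl⟩
  -- Step 1: some indicator is not annihilated by `T`.
  have hA0 : ∃ A₀ : Set Ω, ∃ hA₀ : MeasurableSet A₀, T (LatHomAux.ind ν hA₀) ≠ 0 := by
    by_contra h
    push_neg at h
    apply hT
    refine ContinuousLinearMap.ext fun f => ?_
    rw [ContinuousLinearMap.zero_apply]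
    refine Lp.induction (E := ℝ) (μ := ν) (p := 1) ENNReal.one_ne_top (fun f => T f = 0)
      ?_ ?_ ?_ f
    · intro c A hA hμA
      rw [Lp.simpleFunc.coe_indicatorConst, LatHomAux.smul_ind ν hA hμA.ne c, ContinuousLinearMap.map_smul,
        h A hA, smul_zero]
    · intro F G hF hG hFG h1 h2
      rw [map_add, h1, h2, add_zero]
    · exact isClosed_eq T.continuous continuous_const
  obtain ⟨A₀, hA₀, hz⟩ := hA0
  obtain ⟨φ, hφ1, hφz⟩ := exists_dual_vector ℝ (T (LatHomAux.ind ν hA₀)) (norm_ne_zero_iff.mpr hz)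
  set ψ : Lp ℝ 1 ν →L[ℝ] ℝ := φ.comp T with hψdef
  set c : ℝ := ‖T (LatHomAux.ind ν hA₀)‖ with hcdef
  have hc : 0 < c := norm_pos_iff.mpr hz
  have hψA₀ : ψ (LatHomAux.ind ν hA₀) = c := by simpa [hψdef] using hφz
  have hν0 : ν Set.univ ≠ 0 := by
    intro h0
    apply hz
    rw [LatHomAux.ind_null ν hA₀ (measure_mono_null (Set.subset_univ _) h0), map_zero]
  set νR : ℝ := (ν Set.univ).toReal with hνRdef
  have hνRpos : 0 < νR := ENNReal.toReal_pos hν0 (measure_ne_top ν _)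
  set δ : ℝ := c / (2 * νR) with hδdef
  have hδ : 0 < δ := div_pos hc (by positivity)
  have hδνR : δ * νR = c / 2 := by
    rw [hδdef]; field_simp
  set s : SignedMeasure Ω := LatHomAux.funcMeasure ν ψ - δ • ν.toSignedMeasure with hsdef
  have hsapp : ∀ {A : Set Ω} (hA : MeasurableSet A),
      s A = ψ (LatHomAux.ind ν hA) - δ * (ν A).toReal := by
    intro A hA
    rw [hsdef, VectorMeasure.sub_apply, VectorMeasure.smul_apply,
      LatHomAux.funcMeasure_apply ν ψ hA, Measure.toSignedMeasure_apply_measurable hA,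
      smul_eq_mul]
    rfl
  obtain ⟨i, hi, hipos, hineg⟩ := s.exists_compl_positive_negative
  have key : ∀ {A : Set Ω} (hA : MeasurableSet A), A ⊆ i →
      δ * (ν A).toReal ≤ ψ (LatHomAux.ind ν hA) := by
    intro A hA hAi
    have h1 := (VectorMeasure.restrict_le_restrict_iff _ _ hi).mp hipos hA hAi
    rw [VectorMeasure.zero_apply, hsapp hA] at h1
    linarith
  have keyneg : ∀ {A : Set Ω} (hA : MeasurableSet A), A ⊆ iᶜ →
      ψ (LatHomAux.ind ν hA) ≤ δ * (ν A).toReal := by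
    intro A hA hAi
    have h1 := (VectorMeasure.restrict_le_restrict_iff _ _ hi.compl).mp hineg hA hAi
    rw [VectorMeasure.zero_apply, hsapp hA] at h1
    linarith
  have hνi : 0 < ν i := by
    rcases eq_or_ne (ν i) 0 with h0 | h0
    · exfalso
      have hdisj : Disjoint (A₀ ∩ i) (A₀ \ i) :=
        (disjoint_compl_right (a := i)).mono Set.inter_subset_right (fun x hx => hx.2)
      have hsplit : LatHomAux.ind ν hA₀ =
          LatHomAux.ind ν (hA₀.inter hi) + LatHomAux.ind ν (hA₀.diff hi) := by
        rw [← LatHomAux.ind_disjoint_union ν (hA₀.inter hi) (hA₀.diff hi) hdisj]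
        exact LatHomAux.ind_congr ν hA₀ _ (Set.inter_union_diff A₀ i).symm
      rw [hsplit, map_add] at hψA₀
      have hz1 : ψ (LatHomAux.ind ν (hA₀.inter hi)) = 0 := by
        rw [LatHomAux.ind_null ν _ (measure_mono_null Set.inter_subset_right h0), map_zero]
      have hz2 : ψ (LatHomAux.ind ν (hA₀.diff hi)) ≤ δ * (ν (A₀ \ i)).toReal :=
        keyneg (hA₀.diff hi) (fun x hx => hx.2)
      have hz3 : (ν (A₀ \ i)).toReal ≤ νR :=
        ENNReal.toReal_mono (measure_ne_top ν _) (measure_mono (Set.subset_univ _))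
      nlinarith
    · exact pos_iff_ne_zero.mpr h0
  -- Step 2: the key inequality on the positive set `i`.
  have main : ∀ g : Lp ℝ 1 ν,
      δ * ∫ x, ((LatHomAux.mulInd ν hi (g ⊔ 0)) : Ω → ℝ) x ∂ν ≤
        ψ (LatHomAux.mulInd ν hi (g ⊔ 0)) := by
    refine Lp.induction (E := ℝ) (μ := ν) (p := 1) ENNReal.one_ne_top
      (fun g => δ * ∫ x, ((LatHomAux.mulInd ν hi (g ⊔ 0)) : Ω → ℝ) x ∂ν ≤
        ψ (LatHomAux.mulInd ν hi (g ⊔ 0))) ?_ ?_ ?_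
    · intro cc A hA hμA
      rw [Lp.simpleFunc.coe_indicatorConst]
      have hsup : indicatorConstLp 1 hA hμA.ne cc ⊔ 0 = indicatorConstLp 1 hA hμA.ne (cc ⊔ 0) := by
        ext1
        filter_upwards [Lp.coeFn_sup (indicatorConstLp 1 hA hμA.ne cc) 0,
          Lp.coeFn_zero ℝ 1 ν,
          indicatorConstLp_coeFn (p := 1) (μ := ν) (hs := hA) (hμs := hμA.ne) (c := cc),
          indicatorConstLp_coeFn (p := 1) (μ := ν) (hs := hA) (hμs := hμA.ne) (c := cc ⊔ 0)]
          with x h1 h2 h3 h4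
        rw [h1, Pi.sup_apply, h2, Pi.zero_apply, h3, h4]
        by_cases hx : x ∈ A <;> simp [Set.indicator_apply, hx]
      rw [hsup, LatHomAux.mulInd_indicatorConstLp ν hi hA hμA.ne (cc ⊔ 0),
        integral_indicatorConstLp (hA.inter hi) (measure_ne_top ν _) (cc ⊔ 0),
        LatHomAux.smul_ind ν (hA.inter hi) (measure_ne_top ν _) (cc ⊔ 0),
        ContinuousLinearMap.map_smul]
      have hk := key (hA.inter hi) Set.inter_subset_right
      have h0c : (0:ℝ) ≤ cc ⊔ 0 := le_sup_right
      rw [smul_eq_mul, smul_eq_mul]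
      change δ * ν.real (A ∩ i) ≤ _ at hk
      nlinarith
    · intro F G hF hG hdisj h1 h2
      have hsup : (hF.toLp F + hG.toLp G) ⊔ 0 = (hF.toLp F ⊔ 0) + (hG.toLp G ⊔ 0) := by
        ext1
        filter_upwards [Lp.coeFn_add (hF.toLp F ⊔ 0) (hG.toLp G ⊔ 0),
          Lp.coeFn_sup (hF.toLp F + hG.toLp G) 0, Lp.coeFn_sup (hF.toLp F) 0,
          Lp.coeFn_sup (hG.toLp G) 0, Lp.coeFn_add (hF.toLp F) (hG.toLp G),
          Lp.coeFn_zero ℝ 1 ν, MemLp.coeFn_toLp hF, MemLp.coeFn_toLp hG]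
          with x ha hb hc' hd' he hzz hxF hxG
        rw [hb, Pi.sup_apply, hzz, Pi.zero_apply, he, Pi.add_apply, hxF, hxG,
          ha, Pi.add_apply, hc', Pi.sup_apply, hzz, Pi.zero_apply, hxF,
          hd', Pi.sup_apply, hzz, Pi.zero_apply, hxG]
        by_cases hFx : F x = 0
        · simp [hFx]
        · have hGx : G x = 0 := by
            by_contra hGx
            exact (Set.disjoint_left.mp hdisj (Function.mem_support.mpr hFx))
              (Function.mem_support.mpr hGx)
          simp [hGx]
      set FG1 := LatHomAux.mulInd ν hi (hF.toLp F ⊔ 0) with hFG1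
      set FG2 := LatHomAux.mulInd ν hi (hG.toLp G ⊔ 0) with hFG2
      rw [hsup, map_add, map_add, integral_congr_ae (Lp.coeFn_add FG1 FG2)]
      simp only [Pi.add_apply]
      rw [integral_add (L1.integrable_coeFn FG1) (L1.integrable_coeFn FG2)]
      linarith
    · have hcont : Continuous fun g : Lp ℝ 1 ν => LatHomAux.mulInd ν hi (g ⊔ 0) :=
        (LatHomAux.mulInd ν hi).continuous.comp (continuous_id.sup continuous_const)
      exact isClosed_le (continuous_const.mul (continuous_integral.comp hcont))
        (ψ.continuous.comp hcont)
  refine ⟨i, hi, hνi, δ, hδ, ?_⟩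
  intro f hf
  set g : Lp ℝ 1 ν := f ⊔ (-f) with hgdef
  have hgf : g = |f| := rfl
  have hgsupp : ∀ᵐ x ∂ν, x ∉ i → (g : Ω → ℝ) x = 0 := by
    filter_upwards [hf, Lp.coeFn_sup f (-f), Lp.coeFn_neg f] with x h1 h2 h3 hx
    rw [hgdef, h2, Pi.sup_apply, h3, Pi.neg_apply, h1 hx]
    simp
  have hg0 : (0 : Lp ℝ 1 ν) ≤ g := by
    rw [← Lp.coeFn_nonneg]
    filter_upwards [Lp.coeFn_sup f (-f), Lp.coeFn_neg f] with x h2 h3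
    rw [hgdef, h2, Pi.sup_apply, h3, Pi.neg_apply]
    have := abs_nonneg ((f : Ω → ℝ) x)
    rwa [abs_eq_max_neg] at this
  have hgsup0 : g ⊔ 0 = g := sup_eq_left.mpr hg0
  have hmg : LatHomAux.mulInd ν hi (g ⊔ 0) = g := by
    rw [hgsup0]; exact LatHomAux.mulInd_eq_self ν hi g hgsupp
  have hmain := main g
  rw [hmg] at hmain
  have hnormg : ‖g‖ = ‖f‖ := by rw [hgf]; exact norm_abs_eq_norm f
  have hintg : ∫ x, (g : Ω → ℝ) x ∂ν = ‖g‖ := by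
    rw [L1.norm_eq_integral_norm]
    refine integral_congr_ae ?_
    filter_upwards [(Lp.coeFn_nonneg g).mpr hg0] with x hx
    rw [Real.norm_eq_abs, abs_of_nonneg hx]
  have hTg : ‖T g‖ = ‖T f‖ := by
    rw [hgdef, hlat f (-f), map_neg]
    exact norm_abs_eq_norm (T f)
  have hψg : ψ g ≤ ‖T g‖ := by
    calc ψ g = φ (T g) := rfl
      _ ≤ ‖φ (T g)‖ := le_abs_self _
      _ ≤ ‖φ‖ * ‖T g‖ := φ.le_opNorm _
      _ = ‖T g‖ := by rw [hφ1, one_mul]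
  calc δ * ‖f‖ = δ * ∫ x, (g : Ω → ℝ) x ∂ν := by rw [hintg, hnormg]
    _ ≤ ψ g := hmain
    _ ≤ ‖T g‖ := hψg
    _ = ‖T f‖ := hTg
end
end

section
/- L₁[0,1] is not separably 𝓑𝓛-injective: there exist separable Banach lattices X ⊆ Y (namely X the sublattice of L₁([0,1]²) of functions depending only on the first coordinate, inside Y = L₁([0,1]²)) and a lattice homomorphism T : X → L₁[0,1] admitting no lattice homomorphism extension T̂ : Y → L₁[0,1]. -/
open MeasureTheory
open scoped ENNReal

noncomputable def mU : Measure ℝ := volume.restrict (Set.Icc (0:ℝ) 1)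
noncomputable def mS : Measure (ℝ × ℝ) :=
  volume.restrict ((Set.Icc (0:ℝ) 1) ×ˢ (Set.Icc (0:ℝ) 1))

lemma mS_eq : mS = mU.prod mU := by
  rw [mS, mU, Measure.prod_restrict, ← Measure.volume_eq_prod]

instance : IsProbabilityMeasure mU := ⟨by simp [mU, Real.volume_Icc]⟩
instance : IsProbabilityMeasure mS := by rw [mS_eq]; infer_instance

lemma Lp_coeFn_sum {α E : Type*} [MeasurableSpace α] [NormedAddCommGroup E] {μ : Measure α}
    {p : ℝ≥0∞} (s : Finset ℕ) (f : ℕ → Lp E p μ) :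
    ⇑(∑ i ∈ s, f i) =ᵐ[μ] fun x => ∑ i ∈ s, f i x := by
  classical
  induction s using Finset.induction_on with
  | empty => simp only [Finset.sum_empty]; exact Lp.coeFn_zero E p μ
  | insert a s' hx ih =>
      rw [Finset.sum_insert hx]
      filter_upwards [Lp.coeFn_add (f a) (∑ i ∈ s', f i), ih] with x h1 h2
      rw [Finset.sum_insert hx, h1, Pi.add_apply, h2]

theorem key (T : Lp ℝ 1 mS →L[ℝ] Lp ℝ 1 mU)
    (hsup : ∀ f g, T (f ⊔ g) = T f ⊔ T g)
    (hext : ∀ (f : Lp ℝ 1 mS) (g : ℝ → ℝ),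
      ((f : ℝ × ℝ → ℝ) =ᵐ[mS] fun p => g p.1) → ((T f : ℝ → ℝ) =ᵐ[mU] g)) :
    False := by
  -- T preserves inf
  have hinf : ∀ x y, T (x ⊓ y) = T x ⊓ T y := by
    intro x y
    have h1 : T (x ⊓ y) + T (x ⊔ y) = T x + T y := by
      rw [← map_add, inf_add_sup, map_add]
    rw [hsup x y] at h1
    exact add_right_cancel (h1.trans (inf_add_sup (T x) (T y)).symm)
  -- choose n
  set n : ℕ := ⌊‖T‖⌋₊ + 1 with hndef
  have hn : ‖T‖ < (n : ℝ) := by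
    have := Nat.lt_floor_add_one ‖T‖
    push_cast [hndef]; push_cast at this; linarith
  have hnpos : 0 < (n : ℝ) := lt_of_le_of_lt (norm_nonneg T) hn
  have hnne : (n : ℝ) ≠ 0 := ne_of_gt hnpos
  -- the strips
  set F : ℕ → Set ℝ := fun k => Set.Ioc ((k : ℝ) / n) (((k : ℝ) + 1) / n) with hFdef
  have hFmeas : ∀ k, MeasurableSet (F k) := fun k => measurableSet_Ioc
  have hsmeas : ∀ k, MeasurableSet (Prod.snd ⁻¹' F k : Set (ℝ × ℝ)) :=
    fun k => measurable_snd (hFmeas k)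
  have hsfin : ∀ k, mS (Prod.snd ⁻¹' F k) ≠ ∞ := fun k => measure_ne_top mS _
  set b : ℕ → Lp ℝ 1 mS := fun k => indicatorConstLp 1 (hsmeas k) (hsfin k) (1 : ℝ) with hbdef
  have hb : ∀ k, ⇑(b k) =ᵐ[mS] (Prod.snd ⁻¹' F k).indicator (fun _ => (1:ℝ)) :=
    fun k => indicatorConstLp_coeFn
  set h : ℕ → Lp ℝ 1 mU := fun k => T (b k) with hhdef
  -- nonnegativity
  have hb0 : ∀ k, 0 ≤ b k := by
    intro k
    rw [← Lp.coeFn_nonneg]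
    filter_upwards [hb k] with p hp
    rw [hp]
    exact Set.indicator_nonneg (fun _ _ => zero_le_one) _
  have hh0 : ∀ k, 0 ≤ h k := by
    intro k
    have h1 : b k ⊔ 0 = b k := sup_eq_left.mpr (hb0 k)
    have h2 := hsup (b k) 0
    rw [h1, map_zero] at h2
    exact sup_eq_left.mp h2.symm
  -- measurable representatives of h k
  set g : ℕ → ℝ → ℝ := fun k => (Lp.aestronglyMeasurable (h k)).mk _ with hgdef
  have hgsm : ∀ k, StronglyMeasurable (g k) :=
    fun k => (Lp.aestronglyMeasurable (h k)).stronglyMeasurable_mk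
  have hgae : ∀ k, ⇑(h k) =ᵐ[mU] g k :=
    fun k => (Lp.aestronglyMeasurable (h k)).ae_eq_mk
  have hgint : ∀ k, Integrable (g k) mU :=
    fun k => (L1.integrable_coeFn (h k)).congr (hgae k)
  -- map of fst
  have hmap : Measure.map Prod.fst mS = mU := by
    rw [mS_eq, Measure.map_fst_prod, measure_univ, one_smul]
  have hgint2 : ∀ k, Integrable (fun p : ℝ × ℝ => g k p.1) mS := by
    intro k
    have h1 : Integrable (g k) (Measure.map Prod.fst mS) := by rw [hmap]; exact hgint k
    exact h1.comp_measurable measurable_fst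
  set a : ℕ → Lp ℝ 1 mS :=
    fun k => (memLp_one_iff_integrable.mpr (hgint2 k)).toLp _ with hadef
  have ha : ∀ k, ⇑(a k) =ᵐ[mS] fun p : ℝ × ℝ => g k p.1 :=
    fun k => MemLp.coeFn_toLp _
  have hTa : ∀ k, T (a k) = h k := by
    intro k
    exact Lp.ext ((hext (a k) (g k) (ha k)).trans (hgae k).symm)
  -- a.e. facts on the square
  have hmem : ∀ᵐ p ∂mS, p ∈ (Set.Icc (0:ℝ) 1) ×ˢ (Set.Icc (0:ℝ) 1) :=
    ae_restrict_mem (measurableSet_Icc.prod measurableSet_Icc)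
  have hmU0 : mU ({0} : Set ℝ) = 0 := by
    refine le_antisymm ?_ zero_le
    calc mU ({0} : Set ℝ) ≤ volume ({0} : Set ℝ) := Measure.restrict_le_self _
      _ = 0 := Real.volume_singleton
  have hnull : mS {p : ℝ × ℝ | p.2 = 0} = 0 := by
    rw [mS_eq]
    have hset : {p : ℝ × ℝ | p.2 = 0} = (Set.univ : Set ℝ) ×ˢ ({0} : Set ℝ) := by
      ext p
      constructor
      · intro hp; exact ⟨Set.mem_univ _, hp⟩
      · intro hp; exact hp.2
    rw [hset, Measure.prod_prod, hmU0, mul_zero]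
  have hp2 : ∀ᵐ p ∂mS, p.2 ≠ (0:ℝ) := by
    rw [ae_iff]; simpa using hnull
  -- the sum of the b k is a.e. 1
  have hBcoe : ⇑(∑ k ∈ Finset.range n, b k) =ᵐ[mS] fun _ => (1:ℝ) := by
    filter_upwards [Lp_coeFn_sum (Finset.range n) b, ae_all_iff.mpr hb, hmem, hp2]
      with p hsum hbk hpmem hp20
    rw [hsum]
    set v : ℕ → ℝ := fun j => Set.indicator (Set.Ioi ((j:ℝ)/n)) (fun _ => (1:ℝ)) p.2 with hvdef
    have hterm : ∀ k, (b k) p = v k - v (k + 1) := by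
      intro k
      have hsub : Set.Ioi (((k:ℝ)+1)/n) ⊆ Set.Ioi ((k:ℝ)/n) := by
        apply Set.Ioi_subset_Ioi
        gcongr
        linarith
      have hdiff := Set.indicator_sdiff hsub (fun _ => (1:ℝ))
      rw [Set.Ioi_diff_Ioi] at hdiff
      have hb2 : (b k) p = Set.indicator (F k) (fun _ => (1:ℝ)) p.2 := by
        rw [hbk k]
        by_cases hm : p.2 ∈ F k <;> simp [Set.indicator_apply, hm]
      rw [hb2, hFdef, hdiff, Pi.sub_apply, hvdef]
      push_cast
      ring_nf
    rw [Finset.sum_congr rfl (fun k _ => hterm k), Finset.sum_range_sub']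
    have hv0 : v 0 = 1 := by
      have hpos : 0 < p.2 := lt_of_le_of_ne hpmem.2.1 (Ne.symm hp20)
      simp [hvdef, Set.indicator_apply, hpos]
    have hvn : v n = 0 := by
      have hle : p.2 ≤ 1 := hpmem.2.2
      have : ¬ ((1:ℝ) < p.2) := not_lt.mpr hle
      simp [hvdef, div_self hnne, Set.indicator_apply, this]
    rw [hv0, hvn, sub_zero]
  have hsumh : T (∑ k ∈ Finset.range n, b k) = ∑ k ∈ Finset.range n, h k := by
    simp only [hhdef]
    exact map_sum T b (Finset.range n)
  have hone : ⇑(∑ k ∈ Finset.range n, h k) =ᵐ[mU] fun _ => (1:ℝ) := by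
    rw [← hsumh]
    exact hext _ (fun _ => (1:ℝ)) hBcoe
  -- the test function
  set f : Lp ℝ 1 mS := ∑ k ∈ Finset.range n, (a k ⊓ b k) with hfdef
  have hTf : T f = ∑ k ∈ Finset.range n, h k := by
    rw [hfdef, map_sum]
    refine Finset.sum_congr rfl fun k _ => ?_
    rw [hinf, hTa k]
    exact inf_idem (h k)
  -- norm of T f is 1
  have hnTf : ‖T f‖ = 1 := by
    rw [Lp.norm_def, hTf, eLpNorm_congr_ae hone]
    rw [eLpNorm_const (1:ℝ) one_ne_zero (IsProbabilityMeasure.ne_zero mU)]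
    simp
  -- nonnegativity of the representatives
  have hgnn : ∀ k, ∀ᵐ x ∂mU, 0 ≤ g k x := by
    intro k
    filter_upwards [(Lp.coeFn_nonneg (h k)).mpr (hh0 k), hgae k] with x h1 h2
    rw [← h2]; exact h1
  have hgnn2 : ∀ k, ∀ᵐ p ∂mS, 0 ≤ g k p.1 := by
    intro k
    have h1 : ∀ᵐ y ∂(Measure.map Prod.fst mS), 0 ≤ g k y := by rw [hmap]; exact hgnn k
    exact (Measure.tendsto_ae_map measurable_fst.aemeasurable).eventually h1
  -- the L¹ masses of the h k
  set N : ℕ → ℝ≥0∞ := fun k => ∫⁻ x, ‖g k x‖₊ ∂mU with hNdef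
  have hNfin : ∀ k, N k ≠ ∞ := fun k => ne_of_lt (hgint k).2
  -- bound on each term
  have hterm : ∀ k, ‖a k ⊓ b k‖ ≤ (N k).toReal * (1 / n) := by
    intro k
    have hae : ∀ᵐ p ∂mS, (‖(a k ⊓ b k : Lp ℝ 1 mS) p‖₊ : ℝ≥0∞)
        ≤ (‖g k p.1‖₊ : ℝ≥0∞) * Set.indicator (F k) (fun _ => (1:ℝ≥0∞)) p.2 := by
      filter_upwards [Lp.coeFn_inf (a k) (b k), ha k, hb k, hgnn2 k] with p hpinf hpa hpb hpg
      rw [hpinf, Pi.inf_apply, hpa, hpb]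
      by_cases hm : p.2 ∈ F k
      · have hb1 : (Prod.snd ⁻¹' F k).indicator (fun _ => (1:ℝ)) p = 1 := by
          simp [Set.indicator_apply, hm]
        rw [hb1, Set.indicator_of_mem hm, mul_one]
        have hmin : (0:ℝ) ≤ g k p.1 ⊓ 1 := le_inf hpg zero_le_one
        rw [← enorm_eq_nnnorm, ← enorm_eq_nnnorm, Real.enorm_eq_ofReal hmin, Real.enorm_eq_ofReal hpg]
        exact ENNReal.ofReal_le_ofReal inf_le_left
      · have hb0' : (Prod.snd ⁻¹' F k).indicator (fun _ => (1:ℝ)) p = 0 := by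
          simp [Set.indicator_apply, hm]
        rw [hb0', Set.indicator_of_notMem hm, mul_zero]
        have : g k p.1 ⊓ 0 = 0 := inf_eq_right.mpr hpg
        rw [this]; simp
    have hle : eLpNorm (⇑(a k ⊓ b k)) 1 mS ≤ N k * mU (F k) := by
      rw [eLpNorm_one_eq_lintegral_enorm]
      calc ∫⁻ p, (‖(a k ⊓ b k : Lp ℝ 1 mS) p‖₊ : ℝ≥0∞) ∂mS
          ≤ ∫⁻ p, (‖g k p.1‖₊ : ℝ≥0∞) * Set.indicator (F k) (fun _ => (1:ℝ≥0∞)) p.2 ∂mS :=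
            lintegral_mono_ae hae
        _ = (∫⁻ x, (‖g k x‖₊ : ℝ≥0∞) ∂mU) * ∫⁻ y, Set.indicator (F k) (fun _ => (1:ℝ≥0∞)) y ∂mU := by
            rw [mS_eq]
            exact lintegral_prod_mul
              ((hgsm k).measurable.nnnorm.coe_nnreal_ennreal).aemeasurable
              ((measurable_one.indicator (hFmeas k)).aemeasurable)
        _ = N k * mU (F k) := by
            rw [lintegral_indicator (hFmeas k)]
            simp [hNdef]
    have hμF : mU (F k) ≤ ENNReal.ofReal (1 / n) := by
      calc mU (F k) ≤ volume (F k) := Measure.restrict_le_self _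
        _ = ENNReal.ofReal (((k:ℝ)+1)/n - (k:ℝ)/n) := Real.volume_Ioc
        _ = ENNReal.ofReal (1/n) := by congr 1; field_simp; ring
    rw [Lp.norm_def]
    have hle2 : eLpNorm (⇑(a k ⊓ b k)) 1 mS ≤ N k * ENNReal.ofReal (1/n) :=
      le_trans hle (mul_le_mul_right hμF _)
    calc (eLpNorm (⇑(a k ⊓ b k)) 1 mS).toReal ≤ (N k * ENNReal.ofReal (1/n)).toReal :=
        ENNReal.toReal_mono (ENNReal.mul_ne_top (hNfin k) ENNReal.ofReal_ne_top) hle2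
      _ = (N k).toReal * (1/n) := by
        rw [ENNReal.toReal_mul, ENNReal.toReal_ofReal (by positivity)]
  -- sum of the masses is 1
  have hsumN : ∑ k ∈ Finset.range n, N k = 1 := by
    have hmeas : ∀ k ∈ Finset.range n, AEMeasurable (fun x => (‖g k x‖₊ : ℝ≥0∞)) mU :=
      fun k _ => ((hgsm k).measurable.nnnorm.coe_nnreal_ennreal).aemeasurable
    rw [hNdef]
    dsimp only
    rw [← lintegral_finset_sum' _ hmeas]
    have hae : ∀ᵐ x ∂mU, ∑ k ∈ Finset.range n, (‖g k x‖₊ : ℝ≥0∞) = 1 := by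
      filter_upwards [hone, Lp_coeFn_sum (Finset.range n) h, ae_all_iff.mpr hgae,
        ae_all_iff.mpr hgnn] with x h1 h2 h3 h4
      have e1 : ∀ k ∈ Finset.range n, (‖g k x‖₊ : ℝ≥0∞) = ENNReal.ofReal (g k x) :=
        fun k _ => by rw [← enorm_eq_nnnorm]; exact Real.enorm_eq_ofReal (h4 k)
      rw [Finset.sum_congr rfl e1, ← ENNReal.ofReal_sum_of_nonneg (fun k _ => h4 k)]
      have e2 : ∑ k ∈ Finset.range n, g k x = 1 := by
        have e3 : ∑ k ∈ Finset.range n, g k x = ∑ k ∈ Finset.range n, (h k : ℝ → ℝ) x :=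
          Finset.sum_congr rfl (fun k _ => (h3 k).symm)
        rw [e3, ← h2, h1]
      rw [e2, ENNReal.ofReal_one]
    rw [lintegral_congr_ae hae]
    simp
  -- conclusion
  have hf_norm : ‖f‖ ≤ 1 / n := by
    calc ‖f‖ ≤ ∑ k ∈ Finset.range n, ‖a k ⊓ b k‖ := norm_sum_le _ _
      _ ≤ ∑ k ∈ Finset.range n, (N k).toReal * (1/n) := Finset.sum_le_sum (fun k _ => hterm k)
      _ = (∑ k ∈ Finset.range n, (N k).toReal) * (1/n) := by rw [Finset.sum_mul]
      _ = 1 * (1/n) := by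
          congr 1
          rw [← ENNReal.toReal_sum (fun k _ => hNfin k), hsumN, ENNReal.toReal_one]
      _ = 1/n := one_mul _
  have hcontr : (1:ℝ) ≤ ‖T‖ * (1/n) := by
    calc (1:ℝ) = ‖T f‖ := hnTf.symm
      _ ≤ ‖T‖ * ‖f‖ := T.le_opNorm f
      _ ≤ ‖T‖ * (1/n) := mul_le_mul_of_nonneg_left hf_norm (norm_nonneg T)
  have hlt : ‖T‖ * (1/n) < 1 := by
    rw [mul_one_div, div_lt_one hnpos]
    exact hn
  linarith

/-- `L₁[0,1]` is not separably `𝓑𝓛`-injective: inside the separable Banach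
lattice `Y = L₁([0,1]²)` consider the closed sublattice `X` of functions
depending only on the first coordinate, and the lattice homomorphism
`T : X → L₁[0,1]` identifying such a function with a function of one variable.
Then `T` admits no lattice homomorphism extension `T̂ : Y → L₁[0,1]`; i.e.
there is no lattice homomorphism `T̂ : L₁([0,1]²) → L₁[0,1]` such that whenever
`f ∈ L₁([0,1]²)` equals `g ∘ fst` a.e. for some `g : ℝ → ℝ`, then `T̂ f = g`
a.e. -/
theorem L1_not_separably_BL_injective :
    ¬ ∃ T : Lp ℝ 1 (volume.restrict ((Set.Icc (0:ℝ) 1) ×ˢ (Set.Icc (0:ℝ) 1)))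
          →L[ℝ] Lp ℝ 1 (volume.restrict (Set.Icc (0:ℝ) 1)),
        (∀ f g, T (f ⊔ g) = T f ⊔ T g) ∧
        ∀ (f : Lp ℝ 1 (volume.restrict ((Set.Icc (0:ℝ) 1) ×ˢ (Set.Icc (0:ℝ) 1))))
          (g : ℝ → ℝ),
          ((f : ℝ × ℝ → ℝ) =ᵐ[volume.restrict ((Set.Icc (0:ℝ) 1) ×ˢ (Set.Icc (0:ℝ) 1))]
            fun p => g p.1) →
          ((T f : ℝ → ℝ) =ᵐ[volume.restrict (Set.Icc (0:ℝ) 1)] g) := by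
  rintro ⟨T, h1, h2⟩
  exact key T h1 h2
end
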